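/- arXiv:1712.00150 — 14 statements merged into one kernel-verified Lean document; each statement's English description precedes it below -/
import Mathlib

section
/- Let t, r, d be positive integers and e an integer with 0 ≤ e < d. The standard pattern set T(d,e) = {(dx+ey, y) : x, y ∈ ℤ} ⊆ ℤ×ℤ is a (t,r) broadcast if and only if for every integer i with 0 ≤ i < d, the total signal received at the vertex (i,0) from the towers in T(d,e) is at least r. -/
open Filter Topology

/-- Graph (L¹) distance on the infinite grid ℤ×ℤ. -/
def gridDist (u v : ℤ × ℤ) : ℕ := (u.1 - v.1).natAbs + (u.2 - v.2).natAbs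

open Classical in
/-- Total signal received at `v` from towers of strength `t` located at the points of `S`:
the finite sum `∑_{T ∈ S, dist(v,T) < t} (t − dist(v,T))`. -/
noncomputable def totalSignal (t : ℕ) (S : Set (ℤ × ℤ)) (v : ℤ × ℤ) : ℕ :=
  ∑ T ∈ (Finset.Icc (v.1 - (t : ℤ)) (v.1 + (t : ℤ)) ×ˢ
      Finset.Icc (v.2 - (t : ℤ)) (v.2 + (t : ℤ))).filter
      (fun T => T ∈ S ∧ gridDist v T < t),
    (t - gridDist v T)

/-- `S` is a `(t,r)` broadcast if every vertex receives total signal at least `r`. -/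
def IsBroadcast (t r : ℕ) (S : Set (ℤ × ℤ)) : Prop :=
  ∀ v : ℤ × ℤ, r ≤ totalSignal t S v

/-- The standard pattern `T(d,e) = {(dx+ey, y) : x, y ∈ ℤ}`. -/
def stdPattern (d e : ℤ) : Set (ℤ × ℤ) := {p | ∃ x y : ℤ, p = (d * x + e * y, y)}

open Classical in
/-- The number of points of `S` in the square `V_n = {(a,b) : |a| ≤ n, |b| ≤ n}`. -/
noncomputable def gridCount (S : Set (ℤ × ℤ)) (n : ℕ) : ℕ :=
  ((Finset.Icc (-(n : ℤ)) (n : ℤ) ×ˢ Finset.Icc (-(n : ℤ)) (n : ℤ)).filter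
    (fun v => v ∈ S)).card

lemma stdPattern_sub {d e : ℤ} {p q : ℤ × ℤ} (hp : p ∈ stdPattern d e)
    (hq : q ∈ stdPattern d e) : p - q ∈ stdPattern d e := by
  obtain ⟨x1, y1, rfl⟩ := hp
  obtain ⟨x2, y2, rfl⟩ := hq
  exact ⟨x1 - x2, y1 - y2, by simp [Prod.ext_iff]; ring⟩

lemma stdPattern_add {d e : ℤ} {p q : ℤ × ℤ} (hp : p ∈ stdPattern d e)
    (hq : q ∈ stdPattern d e) : p + q ∈ stdPattern d e := by
  obtain ⟨x1, y1, rfl⟩ := hp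
  obtain ⟨x2, y2, rfl⟩ := hq
  exact ⟨x1 + x2, y1 + y2, by simp [Prod.ext_iff]; ring⟩

lemma gridDist_shift (v T w : ℤ × ℤ) : gridDist (v + w) T = gridDist v (T - w) := by
  unfold gridDist
  congr 1 <;> [skip; skip] <;> congr 1 <;> simp <;> ring

lemma totalSignal_shift (t : ℕ) (d e : ℤ) (w : ℤ × ℤ) (hw : w ∈ stdPattern d e)
    (v : ℤ × ℤ) : totalSignal t (stdPattern d e) (v + w) = totalSignal t (stdPattern d e) v := by
  classical
  unfold totalSignal
  refine Finset.sum_nbij' (fun T => T - w) (fun T => T + w) ?_ ?_ ?_ ?_ ?_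
  · intro T hT
    simp only [Finset.mem_filter, Finset.mem_product, Finset.mem_Icc, Prod.fst_add,
      Prod.snd_add] at hT ⊢
    obtain ⟨⟨⟨h1, h2⟩, h3, h4⟩, hS, hdist⟩ := hT
    refine ⟨⟨⟨by simp; omega, by simp; omega⟩, by simp; omega, by simp; omega⟩,
      stdPattern_sub hS hw, ?_⟩
    rw [← gridDist_shift]; exact hdist
  · intro T hT
    simp only [Finset.mem_filter, Finset.mem_product, Finset.mem_Icc, Prod.fst_add,
      Prod.snd_add] at hT ⊢
    obtain ⟨⟨⟨h1, h2⟩, h3, h4⟩, hS, hdist⟩ := hT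
    refine ⟨⟨⟨by omega, by omega⟩, by omega, by omega⟩, stdPattern_add hS hw, ?_⟩
    rw [gridDist_shift]
    simpa using hdist
  · intro T _; simp
  · intro T _; simp
  · intro T _
    rw [gridDist_shift]

theorem stmt0 (t r : ℕ) (ht : 0 < t) (hr : 0 < r) (d e : ℤ) (hd : 0 < d)
    (he0 : 0 ≤ e) (hed : e < d) :
    IsBroadcast t r (stdPattern d e) ↔
      ∀ i : ℤ, 0 ≤ i → i < d → r ≤ totalSignal t (stdPattern d e) (i, 0) := by
  constructor
  · intro h i _ _; exact h (i, 0)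
  · intro h v
    obtain ⟨a, b⟩ := v
    set i := (a - e * b) % d with hi
    have hi0 : 0 ≤ i := Int.emod_nonneg _ (by omega)
    have hid : i < d := Int.emod_lt_of_pos _ hd
    have hw : ((a - i, b) : ℤ × ℤ) ∈ stdPattern d e := by
      refine ⟨(a - e * b) / d, b, ?_⟩
      have := Int.mul_ediv_add_emod (a - e * b) d
      simp only [Prod.ext_iff]
      constructor
      · omega
      · trivial
    have key : ((a, b) : ℤ × ℤ) = (i, 0) + (a - i, b) := by
      simp [Prod.ext_iff]
    rw [key, totalSignal_shift t d e _ hw]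
    exact h i hi0 hid
end

section
/- Let t be a positive integer. Every (t,1) broadcast S ⊆ ℤ×ℤ satisfies liminf_{n→∞} |S ∩ V_n|/(2n+1)² ≥ 1/(2t² − 2t + 1), where V_n = {(a,b) ∈ ℤ×ℤ : |a| ≤ n, |b| ≤ n}. -/
open Filter Topology

/-- The closed L¹ ball of radius `s` about the origin, as a finset. -/
noncomputable def ballFin (s : ℕ) : Finset (ℤ × ℤ) :=
  (Finset.Icc (-(s:ℤ)) s ×ˢ Finset.Icc (-(s:ℤ)) s).filter
    (fun p => p.1.natAbs + p.2.natAbs ≤ s)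

lemma mem_ballFin {s : ℕ} {p : ℤ × ℤ} : p ∈ ballFin s ↔ p.1.natAbs + p.2.natAbs ≤ s := by
  simp only [ballFin, Finset.mem_filter, Finset.mem_product, Finset.mem_Icc]
  omega

lemma ballFin_card (s : ℕ) : (ballFin s).card = 2*s^2 + 2*s + 1 := by
  induction s with
  | zero =>
    have : ballFin 0 = {((0:ℤ),(0:ℤ))} := by
      ext ⟨a, b⟩
      simp only [mem_ballFin, Finset.mem_singleton, Prod.mk.injEq]
      omega
    simp [this]
  | succ s ih =>
    set A := (Finset.Icc (-(s+1:ℤ)) (s+1)).image (fun a => (a, (s+1:ℤ) - a.natAbs)) with hAdef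
    set B := (Finset.Icc (-(s:ℤ)) s).image (fun a => (a, (a.natAbs : ℤ) - (s+1))) with hBdef
    have hmemA : ∀ p : ℤ × ℤ, p ∈ A ↔ -(s+1:ℤ) ≤ p.1 ∧ p.1 ≤ s+1 ∧ p.2 = (s+1:ℤ) - p.1.natAbs := by
      intro p
      simp only [hAdef, Finset.mem_image, Finset.mem_Icc, Prod.ext_iff]
      constructor
      · rintro ⟨a, ⟨h1, h2⟩, rfl, h3⟩; exact ⟨h1, h2, h3.symm⟩
      · rintro ⟨h1, h2, h3⟩; exact ⟨p.1, ⟨h1, h2⟩, rfl, h3.symm⟩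
    have hmemB : ∀ p : ℤ × ℤ, p ∈ B ↔ -(s:ℤ) ≤ p.1 ∧ p.1 ≤ s ∧ p.2 = (p.1.natAbs : ℤ) - (s+1) := by
      intro p
      simp only [hBdef, Finset.mem_image, Finset.mem_Icc, Prod.ext_iff]
      constructor
      · rintro ⟨a, ⟨h1, h2⟩, rfl, h3⟩; exact ⟨h1, h2, h3.symm⟩
      · rintro ⟨h1, h2, h3⟩; exact ⟨p.1, ⟨h1, h2⟩, rfl, h3.symm⟩
    have hA : A.card = 2*s+3 := by
      rw [Finset.card_image_of_injOn (by intro a _ b _ h; exact (Prod.ext_iff.mp h).1)]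
      rw [Int.card_Icc]
      omega
    have hB : B.card = 2*s+1 := by
      rw [Finset.card_image_of_injOn (by intro a _ b _ h; exact (Prod.ext_iff.mp h).1)]
      rw [Int.card_Icc]
      omega
    have hsplit : ballFin (s+1) = (ballFin s ∪ A) ∪ B := by
      ext p
      simp only [Finset.mem_union, mem_ballFin, hmemA, hmemB]
      omega
    have hdAB : Disjoint A B := by
      rw [Finset.disjoint_left]
      intro p hp hp'
      rw [hmemA] at hp; rw [hmemB] at hp'
      omega
    have hdball : Disjoint (ballFin s) (A ∪ B) := by
      rw [Finset.disjoint_left]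
      intro p hp hp'
      rw [mem_ballFin] at hp
      rw [Finset.mem_union, hmemA, hmemB] at hp'
      omega
    rw [hsplit, Finset.union_assoc, Finset.card_union_of_disjoint hdball,
      Finset.card_union_of_disjoint hdAB, ih, hA, hB]
    ring

lemma exists_tower {t : ℕ} {S : Set (ℤ × ℤ)} (hS : IsBroadcast t 1 S) (v : ℤ × ℤ) :
    ∃ T, T ∈ S ∧ gridDist v T < t := by
  have h := hS v
  have hne : totalSignal t S v ≠ 0 := by omega
  rw [totalSignal] at hne
  obtain ⟨T, hT, -⟩ := Finset.exists_ne_zero_of_sum_ne_zero hne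
  simp only [Finset.mem_filter] at hT
  exact ⟨T, hT.2⟩

lemma fiber_bound {s : ℕ} (F : Finset (ℤ × ℤ)) (T : ℤ × ℤ) :
    (F.filter (fun v => gridDist v T < s + 1)).card ≤ 2*s^2 + 2*s + 1 := by
  classical
  rw [← ballFin_card s]
  apply Finset.card_le_card_of_injOn (fun v => (v.1 - T.1, v.2 - T.2))
  · intro v hv
    rw [Finset.coe_filter] at hv
    rw [Finset.mem_coe, mem_ballFin]; beta_reduce
    have := hv.2
    unfold gridDist at this
    omega
  · intro a _ b _ h
    rw [Prod.ext_iff] at h ⊢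
    simp only at h
    omega

lemma count_lemma (s : ℕ) (S : Set (ℤ × ℤ)) (hS : IsBroadcast (s+1) 1 S) (n : ℕ) :
    (2*n+1)^2 ≤ (2*s^2 + 2*s + 1) * gridCount S (n+s) := by
  classical
  choose τ hτS hτd using fun v => exists_tower hS v
  have hVcard : ((Finset.Icc (-(n : ℤ)) (n : ℤ) ×ˢ Finset.Icc (-(n : ℤ)) (n : ℤ))).card
      = (2*n+1)^2 := by
    rw [Finset.card_product, Int.card_Icc]
    have : ((n:ℤ) + 1 - -(n:ℤ)).toNat = 2*n+1 := by omega
    rw [this]; ring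
  rw [← hVcard, gridCount]
  have := Finset.card_le_mul_card_image_of_maps_to (f := τ)
    (s := Finset.Icc (-(n : ℤ)) (n : ℤ) ×ˢ Finset.Icc (-(n : ℤ)) (n : ℤ))
    (t := (Finset.Icc (-(((n+s) : ℕ) : ℤ)) (((n+s) : ℕ) : ℤ) ×ˢ Finset.Icc (-(((n+s) : ℕ) : ℤ)) (((n+s) : ℕ) : ℤ)).filter
      (fun v => v ∈ S))
    (fun v hv => by
      simp only [Finset.mem_filter, Finset.mem_product, Finset.mem_Icc] at hv ⊢
      refine ⟨?_, hτS v⟩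
      have := hτd v
      unfold gridDist at this
      push_cast
      omega)
    (2*s^2 + 2*s + 1)
    (fun T _ => by
      calc ((Finset.Icc (-(n : ℤ)) (n : ℤ) ×ˢ Finset.Icc (-(n : ℤ)) (n : ℤ)).filter
            (fun v => τ v = T)).card
          ≤ ((Finset.Icc (-(n : ℤ)) (n : ℤ) ×ˢ Finset.Icc (-(n : ℤ)) (n : ℤ)).filter
            (fun v => gridDist v T < s + 1)).card := by
            apply Finset.card_le_card
            apply Finset.monotone_filter_right
            intro v _ hv
            rw [← hv]
            exact hτd v
        _ ≤ 2*s^2 + 2*s + 1 := fiber_bound _ _)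
  exact this

theorem stmt3 (t : ℕ) (ht : 0 < t) (S : Set (ℤ × ℤ)) (hS : IsBroadcast t 1 S) :
    1 / (2 * (t : ℝ) ^ 2 - 2 * (t : ℝ) + 1) ≤
      Filter.atTop.liminf (fun n : ℕ => (gridCount S n : ℝ) / (2 * n + 1) ^ 2) := by
  classical
  obtain ⟨s, rfl⟩ : ∃ s, t = s + 1 := ⟨t - 1, by omega⟩
  set C : ℝ := ((2*s^2 + 2*s + 1 : ℕ) : ℝ) with hCdef
  have hCpos : 0 < C := by rw [hCdef]; positivity
  have hgoal : 2 * ((s+1 : ℕ) : ℝ) ^ 2 - 2 * ((s+1 : ℕ) : ℝ) + 1 = C := by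
    rw [hCdef]; push_cast; ring
  rw [hgoal]
  set f : ℕ → ℝ := fun n => (gridCount S n : ℝ) / (2 * n + 1) ^ 2 with hfdef
  -- gridCount is at most the full square
  have hcount_le : ∀ m : ℕ, gridCount S m ≤ (2*m+1)^2 := by
    intro m
    rw [gridCount]
    calc _ ≤ ((Finset.Icc (-(m : ℤ)) (m : ℤ) ×ˢ Finset.Icc (-(m : ℤ)) (m : ℤ))).card :=
          Finset.card_filter_le _ _
      _ = (2*m+1)^2 := by
          rw [Finset.card_product, Int.card_Icc]
          have : ((m:ℤ) + 1 - -(m:ℤ)).toNat = 2*m+1 := by omega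
          rw [this]; ring
  have hf1 : ∀ m : ℕ, f m ≤ 1 := by
    intro m
    rw [hfdef]
    have hpos : (0:ℝ) < (2 * (m:ℝ) + 1) ^ 2 := by positivity
    rw [div_le_one hpos]
    have := hcount_le m
    have : ((gridCount S m : ℕ) : ℝ) ≤ (((2*m+1)^2 : ℕ) : ℝ) := by exact_mod_cast this
    calc ((gridCount S m : ℕ) : ℝ) ≤ (((2*m+1)^2 : ℕ) : ℝ) := this
      _ = (2 * (m:ℝ) + 1) ^ 2 := by push_cast; ring
  have hkey : ∀ m : ℕ, s ≤ m →
      (2*(m:ℝ)+1-2*s)^2 / (2*(m:ℝ)+1)^2 * C⁻¹ ≤ f m := by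
    intro m hm
    have h := count_lemma s S hS (m - s)
    rw [Nat.sub_add_cancel hm] at h
    have hcast : (2*((m:ℝ) - s)+1)^2 ≤ C * (gridCount S m : ℝ) := by
      have h' : (((2*(m-s)+1)^2 : ℕ) : ℝ) ≤ C * (gridCount S m : ℝ) := by
        rw [hCdef]; exact_mod_cast h
      calc (2*((m:ℝ) - s)+1)^2 = (((2*(m-s)+1)^2 : ℕ) : ℝ) := by
            push_cast [Nat.cast_sub hm]; ring
        _ ≤ C * (gridCount S m : ℝ) := h'
    have hpos : (0:ℝ) < (2 * (m:ℝ) + 1) ^ 2 := by positivity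
    rw [hfdef]
    have hnum : (2*(m:ℝ)+1-2*s)^2 / C ≤ (gridCount S m : ℝ) := by
      have hX : (2*(m:ℝ)+1-2*s) = 2*((m:ℝ) - s)+1 := by ring
      rw [hX, div_le_iff₀ hCpos]
      linarith [hcast, mul_comm C ((gridCount S m : ℝ))]
    calc (2*(m:ℝ)+1-2*s)^2 / (2*(m:ℝ)+1)^2 * C⁻¹
        = ((2*(m:ℝ)+1-2*s)^2 / C) / (2*(m:ℝ)+1)^2 := by ring
      _ ≤ (gridCount S m : ℝ) / (2*(m:ℝ)+1)^2 := by gcongr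
      _ = f m := by rw [hfdef]
  -- limit argument
  set g : ℕ → ℝ := fun m => ((2*(m:ℝ)+1-2*s)/(2*(m:ℝ)+1))^2 * C⁻¹ with hg
  have hratio : Tendsto (fun m : ℕ => (2*(m:ℝ)+1-2*s)/(2*(m:ℝ)+1)) atTop (𝓝 1) := by
    have h0 : Tendsto (fun m : ℕ => 1/(m:ℝ)) atTop (𝓝 0) := tendsto_one_div_atTop_nhds_zero_nat
    have h1 : Tendsto (fun m : ℕ => (2 + (1-2*(s:ℝ))*(1/(m:ℝ))) / (2 + 1*(1/(m:ℝ)))) atTop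
        (𝓝 ((2 + (1-2*(s:ℝ))*0) / (2 + 1*0))) := by
      apply Tendsto.div
      · exact (tendsto_const_nhds.add (tendsto_const_nhds.mul h0))
      · exact (tendsto_const_nhds.add (tendsto_const_nhds.mul h0))
      · norm_num
    have h2 : ((2 + (1-2*(s:ℝ))*0) / (2 + 1*0)) = 1 := by norm_num
    rw [h2] at h1
    apply h1.congr'
    filter_upwards [eventually_ge_atTop 1] with m hm
    have hm' : (0:ℝ) < m := by exact_mod_cast hm
    field_simp
    ring
  have hgtend : Tendsto g atTop (𝓝 (1 / C)) := by
    have := (hratio.pow 2).mul_const C⁻¹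
    simpa [one_div] using this
  have hglef : g ≤ᶠ[atTop] f := by
    filter_upwards [eventually_ge_atTop s] with m hm
    rw [hg]
    simpa [div_pow] using hkey m hm
  have hliminfg : atTop.liminf g = 1 / C := hgtend.liminf_eq
  rw [← hliminfg]
  exact liminf_le_liminf hglef hgtend.isBoundedUnder_ge
    (Filter.isCoboundedUnder_ge_of_le atTop (x := 1) hf1)
end

section
/- Let t be a positive integer. There exists a (t,1) broadcast S ⊆ ℤ×ℤ whose density exists and equals 1/(2t² − 2t + 1); that is, lim_{n→∞} |S ∩ V_n|/(2n+1)² = 1/(2t² − 2t + 1), where V_n = {(a,b) ∈ ℤ×ℤ : |a| ≤ n, |b| ≤ n}. -/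
open Filter Topology

lemma keyLemma (r m₀ : ℤ) (hr : 0 ≤ r) (h0 : 0 ≤ m₀) (h1 : m₀ ≤ r^2 + r) :
    ∃ δ j : ℤ, |δ| + |j| ≤ r ∧ (2*r^2+2*r+1) ∣ (m₀ - ((2*r+1)*δ + j)) := by
  have he : (0:ℤ) < 2*r+1 := by omega
  set q := (m₀ + r) / (2*r+1) with hqdef
  set s := (m₀ + r) % (2*r+1) with hsdef
  have hdm : (2*r+1) * q + s = m₀ + r := Int.mul_ediv_add_emod _ _
  have hs0 : 0 ≤ s := Int.emod_nonneg _ (by omega)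
  have hs1 : s < 2*r+1 := Int.emod_lt_of_pos _ he
  set j₁ := s - r with hj1def
  have hjl : -r ≤ j₁ := by omega
  have hjr : j₁ ≤ r := by omega
  have hm : m₀ = (2*r+1)*q + j₁ := by linarith
  have hq0 : 0 ≤ q := by
    by_contra h
    push_neg at h
    have h2 : (2*r+1)*q ≤ (2*r+1)*(-1) :=
      mul_le_mul_of_nonneg_left (by omega) (by omega)
    linarith
  have hqr : q ≤ r := by
    by_contra h
    push_neg at h
    have h2 : (2*r+1)*(r+1) ≤ (2*r+1)*q :=
      mul_le_mul_of_nonneg_left (by omega) (by omega)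
    nlinarith
  by_cases hc : q + |j₁| ≤ r
  · refine ⟨q, j₁, by rwa [abs_of_nonneg hq0], ?_⟩
    have hz : m₀ - ((2*r+1)*q + j₁) = 0 := by linarith
    simp [hz]
  · push_neg at hc
    by_cases hj : 0 ≤ j₁
    · rw [abs_of_nonneg hj] at hc
      refine ⟨q - r, j₁ - r - 1, ?_, ⟨1, by linear_combination hm⟩⟩
      rw [abs_of_nonpos (by omega), abs_of_nonpos (by omega)]
      linarith
    · push_neg at hj
      rw [abs_of_neg hj] at hc
      refine ⟨q - r - 1, j₁ + r, ?_, ⟨1, by linear_combination hm⟩⟩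
      rw [abs_of_nonpos (by omega), abs_of_nonneg (by omega)]
      linarith

lemma coverLemma (r : ℤ) (hr : 0 ≤ r) (m : ℤ) :
    ∃ δ j : ℤ, |δ| + |j| ≤ r ∧ (2*r^2+2*r+1) ∣ (m - ((2*r+1)*δ + j)) := by
  set d := 2*r^2+2*r+1 with hddef
  have hdpos : 0 < d := by positivity
  set m' := m % d with hm'def
  have h0 : 0 ≤ m' := Int.emod_nonneg _ (ne_of_gt hdpos)
  have h1 : m' < d := Int.emod_lt_of_pos _ hdpos
  have hdvd : d ∣ m - m' := Int.dvd_self_sub_of_emod_eq rfl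
  by_cases hc : m' ≤ r^2 + r
  · obtain ⟨δ, j, hb, hdvd2⟩ := keyLemma r m' hr h0 hc
    refine ⟨δ, j, hb, ?_⟩
    have h4 : m - ((2*r+1)*δ + j) = (m - m') + (m' - ((2*r+1)*δ + j)) := by ring
    rw [h4]
    exact dvd_add hdvd hdvd2
  · push_neg at hc
    have h2 : 0 ≤ d - m' := by omega
    have h3 : d - m' ≤ r^2 + r := by
      have : d = 2*r^2+2*r+1 := hddef
      linarith
    obtain ⟨δ, j, hb, hdvd2⟩ := keyLemma r (d - m') hr h2 h3
    refine ⟨-δ, -j, by simpa [abs_neg, add_comm] using hb, ?_⟩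
    have h4 : m - ((2*r+1)*(-δ) + -j) =
        (m - m') - ((d - m') - ((2*r+1)*δ + j)) + d := by ring
    rw [h4]
    exact dvd_add (dvd_sub hdvd hdvd2) dvd_rfl

lemma mem_stdPattern_iff (d e : ℤ) (v : ℤ × ℤ) :
    v ∈ stdPattern d e ↔ d ∣ v.1 - e * v.2 := by
  constructor
  · rintro ⟨x, y, hv⟩
    rw [hv]
    exact ⟨x, by ring⟩
  · rintro ⟨x, hx⟩
    exact ⟨x, v.2, by rw [Prod.ext_iff]; constructor <;> simp <;> linarith⟩

lemma broadcast_aux (t : ℕ) (ht : 0 < t) :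
    IsBroadcast t 1 (stdPattern (2*((t:ℤ)-1)^2+2*((t:ℤ)-1)+1) (2*((t:ℤ)-1)+1)) := by
  intro v
  set r : ℤ := (t:ℤ) - 1 with hrdef
  have hr : (0:ℤ) ≤ r := by omega
  obtain ⟨δ, j, hb, x, hx⟩ := coverLemma r hr (v.1 - (2*r+1)*v.2)
  rw [Int.abs_eq_natAbs, Int.abs_eq_natAbs] at hb
  set y : ℤ := v.2 + δ with hydef
  set T : ℤ × ℤ := ((2*r^2+2*r+1)*x + (2*r+1)*y, y) with hTdef
  have hT1 : T.1 = v.1 - j := by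
    simp only [hTdef, hydef]
    linear_combination -hx
  have hT2 : T.2 = v.2 + δ := rfl
  have hTS : T ∈ stdPattern (2*r^2+2*r+1) (2*r+1) := ⟨x, y, rfl⟩
  have hdist : gridDist v T = j.natAbs + δ.natAbs := by
    unfold gridDist
    rw [hT1, hT2]
    have e1 : v.1 - (v.1 - j) = j := by ring
    have e2 : v.2 - (v.2 + δ) = -δ := by ring
    rw [e1, e2, Int.natAbs_neg]
  have hdlt : gridDist v T < t := by
    rw [hdist]; omega
  unfold totalSignal
  refine le_trans ?_ (Finset.single_le_sum
    (f := fun T => t - gridDist v T) (fun i _ => Nat.zero_le _) (a := T) ?_)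
  · omega
  · have hT1' : (2*r^2+2*r+1)*x + (2*r+1)*y = v.1 - j := hT1
    simp only [Finset.mem_filter, Finset.mem_product, Finset.mem_Icc]
    refine ⟨⟨⟨?_, ?_⟩, ?_, ?_⟩, hTS, hdlt⟩
    · rw [hT1]; omega
    · rw [hT1]; omega
    · omega
    · omega
  
lemma rowCount (d c n : ℤ) (hd : 0 < d) (hn : 0 ≤ n) :
    2*n+1-d ≤ d * (((Finset.Icc (-n) n).filter (fun a => d ∣ a - c)).card : ℤ) ∧
    d * (((Finset.Icc (-n) n).filter (fun a => d ∣ a - c)).card : ℤ) ≤ 2*n + d := by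
  set q1 := (n - c) / d with hq1def
  set q2 := (n + c) / d with hq2def
  have hr1 := Int.mul_ediv_add_emod (n - c) d
  have hr1a : 0 ≤ (n - c) % d := Int.emod_nonneg _ (ne_of_gt hd)
  have hr1b : (n - c) % d < d := Int.emod_lt_of_pos _ hd
  have hr2 := Int.mul_ediv_add_emod (n + c) d
  have hr2a : 0 ≤ (n + c) % d := Int.emod_nonneg _ (ne_of_gt hd)
  have hr2b : (n + c) % d < d := Int.emod_lt_of_pos _ hd
  have hb1 : d * q1 ≤ n - c := by linarith
  have hb1' : n - c - d < d * q1 := by linarith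
  have hb2 : d * q2 ≤ n + c := by linarith
  have hb2' : n + c - d < d * q2 := by linarith
  have himg : (Finset.Icc (-n) n).filter (fun a => d ∣ a - c) =
      (Finset.Icc (-q2) q1).image (fun k => d*k + c) := by
    ext a
    simp only [Finset.mem_filter, Finset.mem_Icc, Finset.mem_image]
    constructor
    · rintro ⟨⟨h1, h2⟩, x, hx⟩
      refine ⟨x, ⟨?_, ?_⟩, by linarith⟩
      · have hx2 : -x ≤ q2 := by
          rw [hq2def, Int.le_ediv_iff_mul_le hd]
          linarith
        linarith
      · rw [hq1def, Int.le_ediv_iff_mul_le hd]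
        linarith
    · rintro ⟨x, ⟨hx1, hx2⟩, rfl⟩
      have hxa : x * d ≤ n - c := (Int.le_ediv_iff_mul_le hd).mp hx2
      have hxb : (-x) * d ≤ n + c := (Int.le_ediv_iff_mul_le hd).mp (by linarith)
      exact ⟨⟨by linarith, by linarith⟩, x, by ring⟩
  have hinj : Function.Injective (fun k : ℤ => d*k + c) := by
    intro a b hab
    simp only at hab
    exact mul_left_cancel₀ (ne_of_gt hd) (by linarith)
  rw [himg, Finset.card_image_of_injective _ hinj, Int.card_Icc]
  rcases le_or_gt (q1 + 1 - -q2) 0 with h | h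
  · rw [Int.toNat_of_nonpos h]
    have h5 : d * (q1 + q2) ≤ d * (-1) :=
      mul_le_mul_of_nonneg_left (by omega) (by omega)
    constructor
    · push_cast
      nlinarith
    · push_cast
      linarith
  · rw [Int.toNat_of_nonneg (by omega)]
    constructor
    · nlinarith
    · nlinarith

open Classical in
lemma gridCount_stdPattern (d e : ℤ) (n : ℕ) :
    gridCount (stdPattern d e) n =
      ∑ y ∈ Finset.Icc (-(n:ℤ)) (n:ℤ),
        ((Finset.Icc (-(n:ℤ)) (n:ℤ)).filter (fun a => d ∣ a - e * y)).card := by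
  unfold gridCount
  rw [Finset.card_eq_sum_card_fiberwise
    (f := Prod.snd) (t := Finset.Icc (-(n:ℤ)) (n:ℤ))
    (fun x hx => by
      simp only [Finset.mem_coe, Finset.mem_filter, Finset.mem_product] at hx
      exact hx.1.2)]
  refine Finset.sum_congr rfl (fun y hy => ?_)
  refine Finset.card_bij (fun v _ => v.1) ?_ ?_ ?_
  · intro v hv
    simp only [Finset.mem_filter, Finset.mem_product, mem_stdPattern_iff] at hv
    simp only [Finset.mem_filter]
    refine ⟨hv.1.1.1, ?_⟩
    rcases hv with ⟨⟨_, hS⟩, h2⟩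
    rwa [h2] at hS
  · intro v hv w hw hvw
    simp only [Finset.mem_filter] at hv hw
    exact Prod.ext hvw (hv.2.trans hw.2.symm)
  · intro a ha
    simp only [Finset.mem_filter] at ha
    refine ⟨(a, y), ?_, rfl⟩
    simp only [Finset.mem_filter, Finset.mem_product, mem_stdPattern_iff]
    exact ⟨⟨⟨ha.1, hy⟩, ha.2⟩, trivial⟩

lemma density_aux (d e : ℤ) (hd : 0 < d) :
    Filter.Tendsto (fun n : ℕ => (gridCount (stdPattern d e) n : ℝ) / (2 * n + 1) ^ 2)
      Filter.atTop (nhds (1 / (d:ℝ))) := by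
  have hkey : ∀ n : ℕ,
      (2*(n:ℤ)+1) * (2*(n:ℤ)+1-d) ≤ d * (gridCount (stdPattern d e) n : ℤ) ∧
      d * (gridCount (stdPattern d e) n : ℤ) ≤ (2*(n:ℤ)+1) * (2*(n:ℤ)+d) := by
    intro n
    have hn0 : (0:ℤ) ≤ (n:ℤ) := Int.ofNat_nonneg n
    have hcard : (Finset.Icc (-(n:ℤ)) (n:ℤ)).card = 2*n+1 := by
      rw [Int.card_Icc]; omega
    rw [gridCount_stdPattern]
    push_cast
    rw [Finset.mul_sum]
    constructor
    · calc (2*(n:ℤ)+1) * (2*(n:ℤ)+1-d)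
          = ∑ _y ∈ Finset.Icc (-(n:ℤ)) (n:ℤ), (2*(n:ℤ)+1-d) := by
            rw [Finset.sum_const, hcard, nsmul_eq_mul]; push_cast; ring
        _ ≤ _ := Finset.sum_le_sum (fun y _ => (rowCount d (e*y) n hd hn0).1)
    · calc ∑ y ∈ Finset.Icc (-(n:ℤ)) (n:ℤ),
            d * (((Finset.Icc (-(n:ℤ)) (n:ℤ)).filter (fun a => d ∣ a - e*y)).card : ℤ)
          ≤ ∑ _y ∈ Finset.Icc (-(n:ℤ)) (n:ℤ), (2*(n:ℤ)+d) :=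
            Finset.sum_le_sum (fun y _ => (rowCount d (e*y) n hd hn0).2)
        _ = (2*(n:ℤ)+1) * (2*(n:ℤ)+d) := by
            rw [Finset.sum_const, hcard, nsmul_eq_mul]; push_cast; ring
  have hD : (0:ℝ) < (d:ℝ) := by exact_mod_cast hd
  have hnorm : ∀ n : ℕ,
      ‖(gridCount (stdPattern d e) n : ℝ) / (2 * n + 1) ^ 2 - 1 / (d:ℝ)‖
        ≤ 1 / (2 * (n:ℝ) + 1) := by
    intro n
    have hP : (0:ℝ) < 2*(n:ℝ)+1 := by positivity
    obtain ⟨hlo, hhi⟩ := hkey n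
    have hlo' : (2*(n:ℝ)+1) * (2*(n:ℝ)+1-(d:ℝ)) ≤ (d:ℝ) * (gridCount (stdPattern d e) n : ℝ) := by
      exact_mod_cast hlo
    have hhi' : (d:ℝ) * (gridCount (stdPattern d e) n : ℝ) ≤ (2*(n:ℝ)+1) * (2*(n:ℝ)+(d:ℝ)) := by
      exact_mod_cast hhi
    have heq : (gridCount (stdPattern d e) n : ℝ) / (2 * n + 1) ^ 2 - 1 / (d:ℝ)
        = ((d:ℝ) * (gridCount (stdPattern d e) n : ℝ) - (2*(n:ℝ)+1)^2)
          / ((d:ℝ) * (2*(n:ℝ)+1)^2) := by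
      field_simp
    have hden : (0:ℝ) < (d:ℝ) * (2*(n:ℝ)+1)^2 := mul_pos hD (by positivity)
    rw [Real.norm_eq_abs, heq, abs_div, abs_of_pos hden]
    have hnum : |(d:ℝ) * (gridCount (stdPattern d e) n : ℝ) - (2*(n:ℝ)+1)^2|
        ≤ (d:ℝ) * (2*(n:ℝ)+1) := by
      rw [abs_le]
      constructor <;> nlinarith
    calc |(d:ℝ) * (gridCount (stdPattern d e) n : ℝ) - (2*(n:ℝ)+1)^2| / ((d:ℝ) * (2*(n:ℝ)+1)^2)
        ≤ ((d:ℝ) * (2*(n:ℝ)+1)) / ((d:ℝ) * (2*(n:ℝ)+1)^2) := (div_le_div_iff_of_pos_right hden).mpr hnum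
      _ = 1 / (2*(n:ℝ)+1) := by
          field_simp
  have h0 : Filter.Tendsto (fun n : ℕ => 1 / (2 * (n:ℝ) + 1)) Filter.atTop (nhds 0) := by
    simp only [one_div]
    apply Filter.Tendsto.inv_tendsto_atTop
    apply Filter.tendsto_atTop_add_const_right
    exact (tendsto_natCast_atTop_atTop (R := ℝ)).const_mul_atTop two_pos
  have h1 := squeeze_zero_norm hnorm h0
  have h2 := h1.add (tendsto_const_nhds (x := 1 / (d:ℝ)) (f := Filter.atTop))
  simpa using h2

theorem stmt4 (t : ℕ) (ht : 0 < t) :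
    ∃ S : Set (ℤ × ℤ), IsBroadcast t 1 S ∧
      Filter.Tendsto (fun n : ℕ => (gridCount S n : ℝ) / (2 * n + 1) ^ 2)
        Filter.atTop (nhds (1 / (2 * (t : ℝ) ^ 2 - 2 * (t : ℝ) + 1))) := by
  have h1 : (1:ℤ) ≤ (t:ℤ) := by exact_mod_cast ht
  have hd : (0:ℤ) < 2*((t:ℤ)-1)^2+2*((t:ℤ)-1)+1 := by nlinarith [sq_nonneg ((t:ℤ)-1)]
  refine ⟨stdPattern (2*((t:ℤ)-1)^2+2*((t:ℤ)-1)+1) (2*((t:ℤ)-1)+1), broadcast_aux t ht, ?_⟩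
  have hval : ((2*((t:ℤ)-1)^2+2*((t:ℤ)-1)+1 : ℤ) : ℝ) = 2*(t:ℝ)^2 - 2*(t:ℝ) + 1 := by
    push_cast; ring
  rw [show (1 / (2*(t:ℝ)^2 - 2*(t:ℝ)+1)) = 1 / ((2*((t:ℤ)-1)^2+2*((t:ℤ)-1)+1 : ℤ):ℝ) from by
    rw [hval]]
  exact density_aux _ _ hd
end

section
/- Let t be an integer with t > 2. There exists a (t,2) broadcast S ⊆ ℤ×ℤ whose density exists and equals 1/(2(t−1)²); that is, lim_{n→∞} |S ∩ V_n|/(2n+1)² = 1/(2(t−1)²), where V_n = {(a,b) ∈ ℤ×ℤ : |a| ≤ n, |b| ≤ n}. -/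
open Filter Topology

def diagLat (m : ℤ) : Set (ℤ × ℤ) := {p | (2*m) ∣ (p.1 + p.2) ∧ (2*m) ∣ (p.1 - p.2)}

section
open Classical

lemma tower_in (t : ℕ) (a b A B : ℤ)
    (hS : (A, B) ∈ diagLat ((t:ℤ)-1))
    (hd : (a - A).natAbs + (b - B).natAbs < t) :
    (A, B) ∈ (Finset.Icc (a - (t:ℤ)) (a + (t:ℤ)) ×ˢ
      Finset.Icc (b - (t:ℤ)) (b + (t:ℤ))).filter
      (fun T => T ∈ diagLat ((t:ℤ)-1) ∧ gridDist (a, b) T < t) := by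
  rw [Finset.mem_filter, Finset.mem_product, Finset.mem_Icc, Finset.mem_Icc]
  simp only [gridDist]
  refine ⟨⟨⟨?_, ?_⟩, ?_, ?_⟩, hS, ?_⟩ <;> simpa using by omega

lemma broadcast_diag (t : ℕ) (ht : 2 < t) :
    IsBroadcast t 2 (diagLat ((t : ℤ) - 1)) := by
  intro v
  obtain ⟨a, b⟩ := v
  have hm2 : (2:ℤ) ≤ (t:ℤ) - 1 := by omega
  set m : ℤ := (t : ℤ) - 1 with hm
  have h2m : (0:ℤ) < 2*m := by omega
  have hrp0 : 0 ≤ (a + b + m) % (2*m) := Int.emod_nonneg _ (by omega)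
  have hrp1 : (a + b + m) % (2*m) < 2*m := Int.emod_lt_of_pos _ h2m
  have hrq0 : 0 ≤ (a - b + m) % (2*m) := Int.emod_nonneg _ (by omega)
  have hrq1 : (a - b + m) % (2*m) < 2*m := Int.emod_lt_of_pos _ h2m
  obtain ⟨rp, kp, hkp, hrp0, hrp1⟩ :
      ∃ rp kp, a + b + m = 2*(m*kp) + rp ∧ 0 ≤ rp ∧ rp < 2*m :=
    ⟨_, (a+b+m)/(2*m), by have := Int.mul_ediv_add_emod (a+b+m) (2*m); linarith, hrp0, hrp1⟩
  obtain ⟨rq, kq, hkq, hrq0, hrq1⟩ :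
      ∃ rq kq, a - b + m = 2*(m*kq) + rq ∧ 0 ≤ rq ∧ rq < 2*m :=
    ⟨_, (a-b+m)/(2*m), by have := Int.mul_ediv_add_emod (a-b+m) (2*m); linarith, hrq0, hrq1⟩
  unfold totalSignal
  by_cases hBp : rp = 0
  · -- two towers
    have hS1 : ((m*kp + m*kq, m*kp - m*kq) : ℤ × ℤ) ∈ diagLat ((t:ℤ)-1) :=
      ⟨⟨kp, by push_cast; ring⟩, ⟨kq, by push_cast; ring⟩⟩
    have hS2 : ((m*kp + m*kq - m, m*kp - m*kq - m) : ℤ × ℤ) ∈ diagLat ((t:ℤ)-1) :=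
      ⟨⟨kp - 1, by push_cast; ring⟩, ⟨kq, by push_cast; ring⟩⟩
    have hd1 : (a - (m*kp + m*kq)).natAbs + (b - (m*kp - m*kq)).natAbs < t := by omega
    have hd2 : (a - (m*kp + m*kq - m)).natAbs + (b - (m*kp - m*kq - m)).natAbs < t := by
      omega
    have hne : ((m*kp + m*kq, m*kp - m*kq) : ℤ × ℤ) ≠ (m*kp + m*kq - m, m*kp - m*kq - m) := by
      intro h
      rw [Prod.mk.injEq] at h
      omega
    have hsub : ({(m*kp + m*kq, m*kp - m*kq), (m*kp + m*kq - m, m*kp - m*kq - m)} :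
        Finset (ℤ × ℤ)) ⊆
        (Finset.Icc (a - (t:ℤ)) (a + (t:ℤ)) ×ˢ
          Finset.Icc (b - (t:ℤ)) (b + (t:ℤ))).filter
          (fun T => T ∈ diagLat ((t:ℤ)-1) ∧ gridDist (a, b) T < t) := by
      intro x hx
      rcases Finset.mem_insert.mp hx with h | h
      · subst h; exact tower_in t a b _ _ hS1 hd1
      · rw [Finset.mem_singleton.mp h]; exact tower_in t a b _ _ hS2 hd2
    calc (2:ℕ) ≤ ∑ T ∈ ({(m*kp + m*kq, m*kp - m*kq), (m*kp + m*kq - m, m*kp - m*kq - m)} :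
            Finset (ℤ × ℤ)), (t - gridDist (a,b) T) := by
          rw [Finset.sum_pair hne]
          simp only [gridDist]
          omega
      _ ≤ _ := Finset.sum_le_sum_of_subset hsub
  · by_cases hBq : rq = 0
    · have hS1 : ((m*kp + m*kq, m*kp - m*kq) : ℤ × ℤ) ∈ diagLat ((t:ℤ)-1) :=
        ⟨⟨kp, by push_cast; ring⟩, ⟨kq, by push_cast; ring⟩⟩
      have hS2 : ((m*kp + m*kq - m, m*kp - m*kq + m) : ℤ × ℤ) ∈ diagLat ((t:ℤ)-1) :=
        ⟨⟨kp, by push_cast; ring⟩, ⟨kq - 1, by push_cast; ring⟩⟩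
      have hd1 : (a - (m*kp + m*kq)).natAbs + (b - (m*kp - m*kq)).natAbs < t := by omega
      have hd2 : (a - (m*kp + m*kq - m)).natAbs + (b - (m*kp - m*kq + m)).natAbs < t := by
        omega
      have hne : ((m*kp + m*kq, m*kp - m*kq) : ℤ × ℤ) ≠ (m*kp + m*kq - m, m*kp - m*kq + m) := by
        intro h
        rw [Prod.mk.injEq] at h
        omega
      have hsub : ({(m*kp + m*kq, m*kp - m*kq), (m*kp + m*kq - m, m*kp - m*kq + m)} :
          Finset (ℤ × ℤ)) ⊆
          (Finset.Icc (a - (t:ℤ)) (a + (t:ℤ)) ×ˢ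
            Finset.Icc (b - (t:ℤ)) (b + (t:ℤ))).filter
            (fun T => T ∈ diagLat ((t:ℤ)-1) ∧ gridDist (a, b) T < t) := by
        intro x hx
        rcases Finset.mem_insert.mp hx with h | h
        · subst h; exact tower_in t a b _ _ hS1 hd1
        · rw [Finset.mem_singleton.mp h]; exact tower_in t a b _ _ hS2 hd2
      calc (2:ℕ) ≤ ∑ T ∈ ({(m*kp + m*kq, m*kp - m*kq), (m*kp + m*kq - m, m*kp - m*kq + m)} :
              Finset (ℤ × ℤ)), (t - gridDist (a,b) T) := by
            rw [Finset.sum_pair hne]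
            simp only [gridDist]
            omega
        _ ≤ _ := Finset.sum_le_sum_of_subset hsub
    · -- single tower with signal ≥ 2
      have hS1 : ((m*kp + m*kq, m*kp - m*kq) : ℤ × ℤ) ∈ diagLat ((t:ℤ)-1) :=
        ⟨⟨kp, by push_cast; ring⟩, ⟨kq, by push_cast; ring⟩⟩
      have hd1 : (a - (m*kp + m*kq)).natAbs + (b - (m*kp - m*kq)).natAbs < t := by omega
      have hmem := tower_in t a b _ _ hS1 hd1
      calc (2:ℕ) ≤ t - gridDist (a,b) (m*kp + m*kq, m*kp - m*kq) := by
            simp only [gridDist]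
            omega
        _ ≤ _ := Finset.single_le_sum (f := fun T => t - gridDist (a,b) T) (fun i _ => Nat.zero_le _) hmem

end

section
open Classical

lemma parity_square_card (K : ℕ) :
    ((Finset.Icc (-(K:ℤ)) (K:ℤ) ×ˢ Finset.Icc (-(K:ℤ)) (K:ℤ)).filter
      (fun sd => (2:ℤ) ∣ sd.1 + sd.2)).card = 2*K^2 + 2*K + 1 := by
  set B : Finset ℤ := Finset.Icc (-(K:ℤ)) (K:ℤ) with hB
  set Be : Finset ℤ := B.filter (fun s => (2:ℤ) ∣ s) with hBe
  set Bo : Finset ℤ := B.filter (fun s => ¬ (2:ℤ) ∣ s) with hBo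
  have hsplit : (B ×ˢ B).filter (fun sd => (2:ℤ) ∣ sd.1 + sd.2)
      = Be ×ˢ Be ∪ Bo ×ˢ Bo := by
    ext ⟨s, d⟩
    simp only [Finset.mem_filter, Finset.mem_product, Finset.mem_union, hBe, hBo]
    constructor
    · rintro ⟨⟨h1, h2⟩, h3⟩
      by_cases hs : (2:ℤ) ∣ s
      · exact Or.inl ⟨⟨h1, hs⟩, h2, by omega⟩
      · exact Or.inr ⟨⟨h1, hs⟩, h2, by omega⟩
    · rintro (⟨⟨h1, hs⟩, h2, hd⟩ | ⟨⟨h1, hs⟩, h2, hd⟩) <;> exact ⟨⟨h1, h2⟩, by omega⟩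
  have hdisj : Disjoint (Be ×ˢ Be) (Bo ×ˢ Bo) := by
    rw [Finset.disjoint_left]
    rintro ⟨s, d⟩ hx hy
    simp only [Finset.mem_product, Finset.mem_filter, hBe, hBo] at hx hy
    exact hy.1.2 hx.1.2
  have hcardB : B.card = 2*K + 1 := by
    rw [hB, Int.card_Icc]
    omega
  have hBe_eq : Be = (Finset.Icc (-((K/2 : ℕ) : ℤ)) ((K/2 : ℕ) : ℤ)).image (fun j => 2*j) := by
    ext s
    simp only [hBe, hB, Finset.mem_filter, Finset.mem_Icc, Finset.mem_image]
    constructor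
    · rintro ⟨⟨h1, h2⟩, j, hj⟩
      exact ⟨j, by omega, by omega⟩
    · rintro ⟨j, hj, rfl⟩
      exact ⟨⟨by omega, by omega⟩, ⟨j, by ring⟩⟩
  have hcardBe : Be.card = 2*(K/2) + 1 := by
    rw [hBe_eq, Finset.card_image_of_injective _ (mul_right_injective₀ two_ne_zero),
      Int.card_Icc]
    omega
  have hBoe : Bo = B \ Be := by rw [hBo, hBe, Finset.filter_not]
  have hcardBo : Bo.card = 2*K + 1 - (2*(K/2) + 1) := by
    rw [hBoe, Finset.card_sdiff_of_subset (Finset.filter_subset _ _), ← hBe, hcardBe, hcardB]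
  rw [hsplit, Finset.card_union_of_disjoint hdisj, Finset.card_product,
    Finset.card_product, hcardBe, hcardBo]
  rcases Nat.even_or_odd' K with ⟨k, hk | hk⟩ <;> subst hk
  · have h1 : 2*k/2 = k := by omega
    rw [h1]
    have h2 : 2*(2*k) + 1 - (2*k+1) = 2*k := by omega
    rw [h2]
    ring
  · have h1 : (2*k+1)/2 = k := by omega
    rw [h1]
    have h2 : 2*(2*k+1) + 1 - (2*k+1) = 2*k+2 := by omega
    rw [h2]
    ring

lemma bnd_of_mul {m s K n : ℤ} (hm : 0 < m) (h1 : -n ≤ m*s) (h2 : m*s ≤ n)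
    (h3 : m*K ≤ n) (h4 : n < m*(K+1)) : -K ≤ s ∧ s ≤ K := by
  constructor
  · nlinarith
  · nlinarith

lemma gridCount_diag (t : ℕ) (ht : 2 < t) (n : ℕ) :
    gridCount (diagLat ((t:ℤ)-1)) n = 2*(n/(t-1))^2 + 2*(n/(t-1)) + 1 := by
  set m : ℕ := t - 1 with hmdef
  have hm2 : 2 ≤ m := by omega
  set K : ℕ := n / m with hKdef
  have hd1 : m * K ≤ n := by rw [hKdef]; exact Nat.mul_div_le n m
  have hd2 : n < m * (K + 1) := by
    rw [hKdef]
    exact Nat.lt_mul_div_succ n (by omega)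
  have hc1 : ((m:ℕ):ℤ) * ((K:ℕ):ℤ) ≤ (n:ℤ) := by exact_mod_cast hd1
  have hc2 : (n:ℤ) < ((m:ℕ):ℤ) * (((K:ℕ):ℤ) + 1) := by exact_mod_cast hd2
  have hm0 : ((m:ℕ):ℤ) ≠ 0 := by omega
  unfold gridCount
  rw [show ((t:ℤ) - 1) = ((m:ℕ):ℤ) from by omega]
  have himg : ((Finset.Icc (-(n : ℤ)) (n : ℤ) ×ˢ Finset.Icc (-(n : ℤ)) (n : ℤ)).filter
      (fun v => v ∈ diagLat ((m:ℕ):ℤ)))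
      = ((Finset.Icc (-(K:ℤ)) (K:ℤ) ×ˢ Finset.Icc (-(K:ℤ)) (K:ℤ)).filter
        (fun sd => (2:ℤ) ∣ sd.1 + sd.2)).image
        (fun sd => (((m:ℕ):ℤ)*sd.1, ((m:ℕ):ℤ)*sd.2)) := by
    ext ⟨x, y⟩
    simp only [Finset.mem_filter, Finset.mem_product, Finset.mem_Icc, Finset.mem_image,
      diagLat, Set.mem_setOf_eq]
    constructor
    · rintro ⟨⟨⟨hx1, hx2⟩, hy1, hy2⟩, ⟨u, hu⟩, ⟨v, hv⟩⟩
      have hxe : x = ((m:ℕ):ℤ) * (u + v) := by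
        have h2x : 2*x = 2*(((m:ℕ):ℤ)*(u+v)) := by linear_combination hu + hv
        linarith
      have hye : y = ((m:ℕ):ℤ) * (u - v) := by
        have h2y : 2*y = 2*(((m:ℕ):ℤ)*(u-v)) := by linear_combination hu - hv
        linarith
      have hb1 := bnd_of_mul (m := ((m:ℕ):ℤ)) (s := u + v) (by omega)
        (by omega) (by omega) hc1 hc2
      have hb2 := bnd_of_mul (m := ((m:ℕ):ℤ)) (s := u - v) (by omega)
        (by omega) (by omega) hc1 hc2
      refine ⟨(u + v, u - v), ⟨⟨⟨hb1.1, hb1.2⟩, ⟨hb2.1, hb2.2⟩⟩, ⟨u, by ring⟩⟩, ?_⟩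
      simp only [Prod.mk.injEq]
      exact ⟨hxe.symm, hye.symm⟩
    · rintro ⟨sd, hcond, heq⟩
      obtain ⟨s, d⟩ := sd
      obtain ⟨⟨⟨hs1, hs2⟩, hd1', hd2'⟩, w, hw⟩ := hcond
      simp only [Prod.mk.injEq] at heq
      obtain ⟨hx, hy⟩ := heq
      subst hx; subst hy
      have hmpos : (0:ℤ) < ((m:ℕ):ℤ) := by omega
      refine ⟨⟨⟨?_, ?_⟩, ?_, ?_⟩, ⟨w, by linear_combination ((m:ℕ):ℤ) * hw⟩,
        ⟨w - d, by linear_combination ((m:ℕ):ℤ) * hw⟩⟩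
      · nlinarith
      · nlinarith
      · nlinarith
      · nlinarith
  rw [himg, Finset.card_image_of_injective _ ?hinj, parity_square_card]
  case hinj =>
    rintro ⟨s1, d1⟩ ⟨s2, d2⟩ h
    simp only [Prod.mk.injEq] at h ⊢
    exact ⟨mul_left_cancel₀ hm0 h.1, mul_left_cancel₀ hm0 h.2⟩
end

lemma aux_half (c : ℝ) : Tendsto (fun n : ℕ => ((n:ℝ) + c)/(2*n+1)) atTop (𝓝 (1/2)) := by
  have h : Tendsto (fun n : ℕ => 1/(n:ℝ)) atTop (𝓝 0) := tendsto_one_div_atTop_nhds_zero_nat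
  have h2 : Tendsto (fun n : ℕ => (1 + c*(1/(n:ℝ)))/(2 + 1/(n:ℝ))) atTop
      (𝓝 ((1 + c*0)/(2 + 0))) := by
    apply Tendsto.div
    · simpa using tendsto_const_nhds.add (h.const_mul c)
    · simpa using tendsto_const_nhds.add h
    · norm_num
  have h3 : (fun n : ℕ => (1 + c*(1/(n:ℝ)))/(2 + 1/(n:ℝ))) =ᶠ[atTop]
      (fun n : ℕ => ((n:ℝ) + c)/(2*n+1)) := by
    filter_upwards [eventually_ge_atTop 1] with n hn
    have hn0 : (n:ℝ) ≠ 0 := by positivity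
    have hn0' : (n:ℝ) > 0 := by positivity
    rw [div_eq_div_iff (by positivity) (by positivity)]
    field_simp
  have h4 := h2.congr' h3
  norm_num at h4
  exact h4

lemma density_limit (t : ℕ) (ht : 2 < t) :
    Tendsto (fun n : ℕ =>
        ((2*(n/(t-1))^2 + 2*(n/(t-1)) + 1 : ℕ) : ℝ) / (2*(n:ℝ)+1)^2)
      atTop (𝓝 (1/(2*((t:ℝ)-1)^2))) := by
  set m : ℕ := t - 1 with hm
  have hm2 : 2 ≤ m := by omega
  have hmr : (0:ℝ) < (m:ℝ) := by
    have : (2:ℝ) ≤ (m:ℝ) := by exact_mod_cast hm2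
    linarith
  have hmcast : ((m:ℕ):ℝ) = (t:ℝ) - 1 := by
    rw [hm]
    push_cast [Nat.cast_sub (by omega : 1 ≤ t)]
    ring
  have hval : (2/(m:ℝ)^2) * (1/2)^2 = 1/(2*((t:ℝ)-1)^2) := by
    rw [← hmcast]; field_simp
  have hL : Tendsto (fun n : ℕ => 2*(((n:ℝ)+1-(m:ℝ))/(m:ℝ))^2/(2*(n:ℝ)+1)^2) atTop
      (𝓝 (1/(2*((t:ℝ)-1)^2))) := by
    have he : (fun n : ℕ => 2*(((n:ℝ)+1-(m:ℝ))/(m:ℝ))^2/(2*(n:ℝ)+1)^2)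
        = fun n : ℕ => (2/(m:ℝ)^2) * (((n:ℝ) + (1-(m:ℝ)))/(2*(n:ℝ)+1))^2 := by
      funext n
      have h1 : (0:ℝ) < 2*(n:ℝ)+1 := by positivity
      field_simp
      ring
    rw [he, ← hval]
    exact ((aux_half (1-(m:ℝ))).pow 2).const_mul _
  have hU : Tendsto (fun n : ℕ => 2*(((n:ℝ)+(m:ℝ))/(m:ℝ))^2/(2*(n:ℝ)+1)^2) atTop
      (𝓝 (1/(2*((t:ℝ)-1)^2))) := by
    have he : (fun n : ℕ => 2*(((n:ℝ)+(m:ℝ))/(m:ℝ))^2/(2*(n:ℝ)+1)^2)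
        = fun n : ℕ => (2/(m:ℝ)^2) * (((n:ℝ) + (m:ℝ))/(2*(n:ℝ)+1))^2 := by
      funext n
      have h1 : (0:ℝ) < 2*(n:ℝ)+1 := by positivity
      field_simp
    rw [he, ← hval]
    exact ((aux_half ((m:ℝ))).pow 2).const_mul _
  apply tendsto_of_tendsto_of_tendsto_of_le_of_le' hL hU
  · -- lower bound eventually
    filter_upwards [eventually_ge_atTop m] with n hn
    set K : ℕ := n / m with hK
    have hd1 : m * K ≤ n := by rw [hK]; exact Nat.mul_div_le n m
    have hd2 : n + 1 ≤ m * (K + 1) := by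
      rw [hK]; exact Nat.lt_mul_div_succ n (by omega)
    have hc1 : (m:ℝ) * (K:ℝ) ≤ (n:ℝ) := by exact_mod_cast hd1
    have hc2 : (n:ℝ) + 1 ≤ (m:ℝ) * ((K:ℝ) + 1) := by exact_mod_cast hd2
    have hnm : (m:ℝ) ≤ (n:ℝ) := by exact_mod_cast hn
    set x : ℝ := ((n:ℝ)+1-(m:ℝ))/(m:ℝ) with hx
    have hx0 : 0 ≤ x := by
      apply div_nonneg _ (le_of_lt hmr); linarith
    have hxK : x ≤ (K:ℝ) := by
      rw [hx, div_le_iff₀ hmr]; nlinarith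
    have key : 2*x^2 ≤ ((2*K^2 + 2*K + 1 : ℕ) : ℝ) := by
      push_cast
      nlinarith [mul_nonneg (sub_nonneg.2 hxK) (by linarith : (0:ℝ) ≤ (K:ℝ) + x)]
    exact div_le_div_of_nonneg_right key (by positivity)
  · -- upper bound eventually
    filter_upwards [eventually_ge_atTop 1] with n hn
    set K : ℕ := n / m with hK
    have hd1 : m * K ≤ n := by rw [hK]; exact Nat.mul_div_le n m
    have hc1 : (m:ℝ) * (K:ℝ) ≤ (n:ℝ) := by exact_mod_cast hd1
    set y : ℝ := ((n:ℝ)+(m:ℝ))/(m:ℝ) with hy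
    have hKy : (K:ℝ) + 1 ≤ y := by
      rw [hy, le_div_iff₀ hmr]; nlinarith
    have hK0 : (0:ℝ) ≤ (K:ℝ) := Nat.cast_nonneg K
    have key : ((2*K^2 + 2*K + 1 : ℕ) : ℝ) ≤ 2*y^2 := by
      push_cast
      nlinarith [mul_nonneg (sub_nonneg.2 hKy) (by linarith : (0:ℝ) ≤ y + (K:ℝ) + 1)]
    exact div_le_div_of_nonneg_right key (by positivity)

theorem stmt6 (t : ℕ) (ht : 2 < t) :
    ∃ S : Set (ℤ × ℤ), IsBroadcast t 2 S ∧
      Filter.Tendsto (fun n : ℕ => (gridCount S n : ℝ) / (2 * n + 1) ^ 2)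
        Filter.atTop (nhds (1 / (2 * ((t : ℝ) - 1) ^ 2))) := by
  refine ⟨diagLat ((t:ℤ) - 1), broadcast_diag t ht, ?_⟩
  have he : (fun n : ℕ => (gridCount (diagLat ((t:ℤ) - 1)) n : ℝ) / (2 * n + 1) ^ 2)
      = fun n : ℕ => ((2*(n/(t-1))^2 + 2*(n/(t-1)) + 1 : ℕ) : ℝ) / (2*(n:ℝ)+1)^2 := by
    funext n
    rw [gridCount_diag t ht n]
  rw [he]
  exact density_limit t ht
end

section
/- The standard pattern T(3,1) = {(3x+y, y) : x, y ∈ ℤ} is a (2,2) broadcast on the infinite grid; that is, for every vertex v ∈ ℤ×ℤ, the total signal received at v from towers of strength 2 located at the points of T(3,1) is at least 2. -/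
open Filter Topology

lemma mem_std {p q : ℤ} (h : (3:ℤ) ∣ p - q) : (p, q) ∈ stdPattern 3 1 := by
  obtain ⟨x, hx⟩ := h
  refine ⟨x, q, ?_⟩
  simp only [Prod.mk.injEq]
  exact ⟨by omega, trivial⟩

theorem stmt7 : IsBroadcast 2 2 (stdPattern 3 1) := by
  classical
  rintro ⟨a, b⟩
  unfold totalSignal
  have key : (a - b) % 3 = 0 ∨ (a - b) % 3 = 1 ∨ (a - b) % 3 = 2 := by omega
  rcases key with h | h | h
  · have hsub : ({(a, b)} : Finset (ℤ × ℤ)) ⊆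
        (Finset.Icc (a - (2:ℤ)) (a + 2) ×ˢ Finset.Icc (b - (2:ℤ)) (b + 2)).filter
          (fun T => T ∈ stdPattern 3 1 ∧ gridDist (a, b) T < 2) := by
      intro T hT
      simp only [Finset.mem_singleton] at hT
      subst hT
      simp only [Finset.mem_filter, Finset.mem_product, Finset.mem_Icc]
      refine ⟨⟨⟨by omega, by omega⟩, ⟨by omega, by omega⟩⟩, mem_std (by omega), ?_⟩
      simp [gridDist]
    calc (2:ℕ) = ∑ T ∈ ({(a, b)} : Finset (ℤ × ℤ)), (2 - gridDist (a, b) T) := by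
          simp [gridDist]
      _ ≤ _ := Finset.sum_le_sum_of_subset hsub
  · have hne : ((a - 1, b) : ℤ × ℤ) ≠ (a, b + 1) := by
      simp only [ne_eq, Prod.mk.injEq]; omega
    have hsub : ({(a - 1, b), (a, b + 1)} : Finset (ℤ × ℤ)) ⊆
        (Finset.Icc (a - (2:ℤ)) (a + 2) ×ˢ Finset.Icc (b - (2:ℤ)) (b + 2)).filter
          (fun T => T ∈ stdPattern 3 1 ∧ gridDist (a, b) T < 2) := by
      intro T hT
      simp only [Finset.mem_insert, Finset.mem_singleton] at hT
      rcases hT with hT | hT <;> subst hT <;>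
        simp only [Finset.mem_filter, Finset.mem_product, Finset.mem_Icc] <;>
        exact ⟨⟨⟨by omega, by omega⟩, ⟨by omega, by omega⟩⟩, mem_std (by omega),
          by simp [gridDist]⟩
    calc (2:ℕ) = ∑ T ∈ ({(a - 1, b), (a, b + 1)} : Finset (ℤ × ℤ)),
          (2 - gridDist (a, b) T) := by
          rw [Finset.sum_pair hne]; simp [gridDist]
      _ ≤ _ := Finset.sum_le_sum_of_subset hsub
  · have hne : ((a + 1, b) : ℤ × ℤ) ≠ (a, b - 1) := by
      simp only [ne_eq, Prod.mk.injEq]; omega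
    have hsub : ({(a + 1, b), (a, b - 1)} : Finset (ℤ × ℤ)) ⊆
        (Finset.Icc (a - (2:ℤ)) (a + 2) ×ˢ Finset.Icc (b - (2:ℤ)) (b + 2)).filter
          (fun T => T ∈ stdPattern 3 1 ∧ gridDist (a, b) T < 2) := by
      intro T hT
      simp only [Finset.mem_insert, Finset.mem_singleton] at hT
      rcases hT with hT | hT <;> subst hT <;>
        simp only [Finset.mem_filter, Finset.mem_product, Finset.mem_Icc] <;>
        exact ⟨⟨⟨by omega, by omega⟩, ⟨by omega, by omega⟩⟩, mem_std (by omega),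
          by simp [gridDist]⟩
    calc (2:ℕ) = ∑ T ∈ ({(a + 1, b), (a, b - 1)} : Finset (ℤ × ℤ)),
          (2 - gridDist (a, b) T) := by
          rw [Finset.sum_pair hne]; simp [gridDist]
      _ ≤ _ := Finset.sum_le_sum_of_subset hsub
end

section
/- Every (2,2) broadcast S ⊆ ℤ×ℤ satisfies liminf_{n→∞} |S ∩ V_n|/(2n+1)² ≥ 1/3, where V_n = {(a,b) ∈ ℤ×ℤ : |a| ≤ n, |b| ≤ n}. -/
open Filter Topology

open Classical in
noncomputable def gridBox (n : ℕ) : Finset (ℤ × ℤ) :=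
  Finset.Icc (-(n : ℤ)) (n : ℤ) ×ˢ Finset.Icc (-(n : ℤ)) (n : ℤ)

lemma gridBox_card (n : ℕ) : (gridBox n).card = (2 * n + 1) ^ 2 := by
  classical
  rw [gridBox, Finset.card_product, Int.card_Icc]
  have : ((n : ℤ) + 1 - -(n : ℤ)).toNat = 2 * n + 1 := by omega
  rw [this]; ring

open Classical in
lemma key_count (S : Set (ℤ × ℤ)) (hS : IsBroadcast 2 2 S) (n : ℕ) :
    2 * (2 * n + 1) ^ 2 ≤ 6 * gridCount S (n + 1) := by
  classical
  have step1 : 2 * (2 * n + 1) ^ 2 ≤ ∑ v ∈ gridBox n, totalSignal 2 S v := by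
    calc 2 * (2 * n + 1) ^ 2 = ∑ _v ∈ gridBox n, 2 := by
          rw [Finset.sum_const, gridBox_card]; ring
      _ ≤ _ := Finset.sum_le_sum fun v _ => hS v
  have step2 : ∀ v ∈ gridBox n, totalSignal 2 S v =
      ∑ T ∈ gridBox (n + 1), (if T ∈ S ∧ gridDist v T < 2 then 2 - gridDist v T else 0) := by
    intro v hv
    rw [totalSignal, ← Finset.sum_filter]
    apply Finset.sum_congr _ (fun _ _ => rfl)
    simp only [gridBox, Finset.mem_product, Finset.mem_Icc] at hv
    ext T
    simp only [gridBox, Finset.mem_filter, Finset.mem_product, Finset.mem_Icc]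
    constructor
    · rintro ⟨_, hTS, hd⟩
      unfold gridDist at hd
      exact ⟨⟨by push_cast; omega, by push_cast; omega⟩, hTS, hd⟩
    · rintro ⟨_, hTS, hd⟩
      unfold gridDist at hd
      refine ⟨⟨by omega, by omega⟩, hTS, hd⟩
  have step3 : ∑ v ∈ gridBox n, totalSignal 2 S v =
      ∑ T ∈ gridBox (n + 1), ∑ v ∈ gridBox n,
        (if T ∈ S ∧ gridDist v T < 2 then 2 - gridDist v T else 0) := by
    rw [Finset.sum_congr rfl step2, Finset.sum_comm]
  have inner : ∀ T : ℤ × ℤ, ∑ v ∈ gridBox n,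
      (if T ∈ S ∧ gridDist v T < 2 then 2 - gridDist v T else 0) ≤
      (if T ∈ S then 6 else 0) := by
    intro T
    by_cases hT : T ∈ S
    · simp only [hT, true_and, if_true]
      rw [← Finset.sum_filter]
      have hsub : (gridBox n).filter (fun v => gridDist v T < 2) ⊆
          (({((0:ℤ),(0:ℤ)), (1,0), (-1,0), (0,1), (0,-1)} : Finset (ℤ × ℤ)).image
            (fun d => T + d)) := by
        intro v hv
        simp only [Finset.mem_filter] at hv
        have hd := hv.2
        unfold gridDist at hd
        rw [Finset.mem_image]
        refine ⟨(v.1 - T.1, v.2 - T.2), ?_, ?_⟩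
        · simp only [Finset.mem_insert, Finset.mem_singleton, Prod.ext_iff]
          omega
        · ext <;> simp
      calc ∑ v ∈ (gridBox n).filter (fun v => gridDist v T < 2), (2 - gridDist v T)
          ≤ ∑ v ∈ (({((0:ℤ),(0:ℤ)), (1,0), (-1,0), (0,1), (0,-1)} : Finset (ℤ × ℤ)).image
            (fun d => T + d)), (2 - gridDist v T) :=
            Finset.sum_le_sum_of_subset hsub
        _ = ∑ d ∈ ({((0:ℤ),(0:ℤ)), (1,0), (-1,0), (0,1), (0,-1)} : Finset (ℤ × ℤ)),
            (2 - gridDist (T + d) T) := by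
            rw [Finset.sum_image]
            intro a _ b _ h
            exact add_left_cancel h
        _ = 6 := by
            have : ∀ d : ℤ × ℤ, gridDist (T + d) T = d.1.natAbs + d.2.natAbs := by
              intro d; unfold gridDist; simp
            simp only [this]
            decide
    · simp [hT]
  have step4 : ∑ T ∈ gridBox (n + 1), (if T ∈ S then 6 else 0) = 6 * gridCount S (n + 1) := by
    rw [← Finset.sum_filter, Finset.sum_const, smul_eq_mul, mul_comm, gridCount, gridBox]
  calc 2 * (2 * n + 1) ^ 2 ≤ ∑ v ∈ gridBox n, totalSignal 2 S v := step1
    _ = _ := step3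
    _ ≤ ∑ T ∈ gridBox (n + 1), (if T ∈ S then 6 else 0) :=
        Finset.sum_le_sum fun T _ => inner T
    _ = 6 * gridCount S (n + 1) := step4

theorem stmt8 (S : Set (ℤ × ℤ)) (hS : IsBroadcast 2 2 S) :
    (1 : ℝ) / 3 ≤
      Filter.atTop.liminf (fun n : ℕ => (gridCount S n : ℝ) / (2 * n + 1) ^ 2) := by
  classical
  set a : ℕ → ℝ := fun n => (gridCount S n : ℝ) / (2 * n + 1) ^ 2 with ha
  set b : ℕ → ℝ := fun n => 1 / 3 - 3 / n with hbdef
  have hb : Tendsto b atTop (𝓝 (1 / 3)) := by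
    have h3 : Tendsto (fun n : ℕ => (3 : ℝ) / n) atTop (𝓝 0) :=
      tendsto_const_div_atTop_nhds_zero_nat 3
    simpa [hbdef] using (tendsto_const_nhds (x := (1:ℝ)/3)).sub h3
  have hev : ∀ᶠ n in atTop, b n ≤ a n := by
    filter_upwards [eventually_ge_atTop 1] with n hn
    obtain ⟨m, rfl⟩ : ∃ m, n = m + 1 := ⟨n - 1, by omega⟩
    have hkey := key_count S hS m
    have hc : ((2 * m + 1 : ℕ) : ℝ) ^ 2 ≤ 3 * (gridCount S (m + 1) : ℝ) := by
      have : ((2 * (2 * m + 1) ^ 2 : ℕ) : ℝ) ≤ ((6 * gridCount S (m + 1) : ℕ) : ℝ) := by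
        exact_mod_cast hkey
      push_cast at this ⊢
      linarith
    push_cast at hc
    have hm0 : (0:ℝ) < (m : ℝ) + 1 := by positivity
    have hd : (0:ℝ) < (2 * ((m:ℝ) + 1) + 1) ^ 2 := by positivity
    simp only [ha, hbdef]
    push_cast
    have e1 : (1:ℝ)/3 - 3/((m:ℝ)+1) = (((m:ℝ)+1) - 9)/(3*((m:ℝ)+1)) := by
      field_simp; ring
    rw [e1, div_le_div_iff₀ (by positivity) hd]
    have hx : (0:ℝ) ≤ (m:ℝ) := Nat.cast_nonneg m
    nlinarith [hc, hx]
  have hbd : atTop.IsBoundedUnder (· ≥ ·) b := hb.isBoundedUnder_ge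
  have hcb : atTop.IsCoboundedUnder (· ≥ ·) a := by
    apply Filter.IsBoundedUnder.isCoboundedUnder_ge
    refine isBoundedUnder_of ⟨1, fun n => ?_⟩
    have h1 : gridCount S n ≤ (2 * n + 1) ^ 2 := by
      have := Finset.card_filter_le
        (Finset.Icc (-(n : ℤ)) (n : ℤ) ×ˢ Finset.Icc (-(n : ℤ)) (n : ℤ)) (fun v => v ∈ S)
      rw [gridCount]
      calc _ ≤ _ := this
        _ = (2 * n + 1) ^ 2 := by rw [← gridBox, gridBox_card]
    have hd : (0:ℝ) < (2 * (n:ℝ) + 1) ^ 2 := by positivity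
    rw [ha]
    rw [div_le_one hd]
    exact_mod_cast h1
  calc (1:ℝ)/3 = atTop.liminf b := (hb.liminf_eq).symm
    _ ≤ atTop.liminf a := liminf_le_liminf hev hbd hcb
end

section
/- Let t be an integer with t ≥ 2. There exists a (t,3) broadcast S ⊆ ℤ×ℤ whose density exists and is at most 1/(2(t−1)² − 2(t−1) + 1); in other words, the optimal (t,3) broadcast density is at most the optimal (t−1,1) broadcast density 1/(2(t−1)² − 2(t−1) + 1). -/
set_option linter.unusedVariables false
set_option linter.unusedSectionVars false


open Filter Topology

lemma absSumIcc : ∀ r : ℕ, ∑ j ∈ Finset.Icc (-(r:ℤ)) (r:ℤ), |j| = r * (r+1)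
  | 0 => by simp
  | (r+1) => by
      have h1 : Finset.Icc (-((r:ℤ)+1)) ((r:ℤ)+1)
          = insert (-((r:ℤ)+1)) (insert ((r:ℤ)+1) (Finset.Icc (-(r:ℤ)) (r:ℤ))) := by
        ext x; simp only [Finset.mem_Icc, Finset.mem_insert]; omega
      have h2 := absSumIcc r
      push_cast
      rw [h1, Finset.sum_insert (by simp only [Finset.mem_Icc, Finset.mem_insert]; omega),
        Finset.sum_insert (by simp only [Finset.mem_Icc]; omega), h2,
        abs_of_nonpos (by omega), abs_of_nonneg (by omega)]
      ring

noncomputable def ballF (r : ℕ) : Finset (ℤ × ℤ) :=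
  (Finset.Icc (-(r:ℤ)) (r:ℤ) ×ˢ Finset.Icc (-(r:ℤ)) (r:ℤ)).filter
    (fun p => p.1.natAbs + p.2.natAbs ≤ r)

lemma mem_ballF {r : ℕ} {p : ℤ × ℤ} : p ∈ ballF r ↔ p.1.natAbs + p.2.natAbs ≤ r := by
  simp only [ballF, Finset.mem_filter, Finset.mem_product, Finset.mem_Icc]
  omega

lemma ballF_eq (r : ℕ) : ballF r = (Finset.Icc (-(r:ℤ)) (r:ℤ)).biUnion
    (fun j => (Finset.Icc (-((r:ℤ) - j.natAbs)) ((r:ℤ) - j.natAbs)).map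
      ⟨fun i => (i, j), fun a b h => congrArg Prod.fst h⟩) := by
  ext p
  simp only [mem_ballF, Finset.mem_biUnion, Finset.mem_map, Finset.mem_Icc,
    Function.Embedding.coeFn_mk, Prod.ext_iff]
  constructor
  · rintro h
    exact ⟨p.2, by omega, p.1, by omega, rfl, rfl⟩
  · rintro ⟨j, hj, i, hi, h1, h2⟩
    change i = p.1 at h1; change j = p.2 at h2
    omega

lemma card_ballF (r : ℕ) : ((ballF r).card : ℤ) = 2*(r:ℤ)^2 + 2*(r:ℤ) + 1 := by
  rw [ballF_eq, Finset.card_biUnion]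
  · push_cast [Finset.card_map, Int.card_Icc]
    have h : ∀ j ∈ Finset.Icc (-(r:ℤ)) (r:ℤ),
        (((r:ℤ) - |j| + 1 - -((r:ℤ) - |j|)).toNat : ℤ) = 2*(r:ℤ) + 1 - 2*|j| := by
      intro j hj
      simp only [Finset.mem_Icc] at hj
      rw [Int.abs_eq_natAbs]
      omega
    rw [Finset.sum_congr rfl h, Finset.sum_sub_distrib, Finset.sum_const,
      ← Finset.mul_sum, absSumIcc, Int.card_Icc, nsmul_eq_mul]
    have h2 : (((r:ℤ) + 1 - -(r:ℤ)).toNat : ℤ) = 2*(r:ℤ)+1 := by omega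
    rw [h2]
    ring
  · intro a _ b _ hab
    simp only [Finset.disjoint_left, Finset.mem_map, Function.Embedding.coeFn_mk]
    rintro p ⟨i, _, rfl⟩ ⟨i', _, h⟩
    exact hab (congrArg Prod.snd h).symm

lemma auxFalse (R u q A a : ℤ) (hR : 0 ≤ R) (hA : A = (2*R+1)*u + (2*R^2+2*R+1)*q)
    (ha1 : u ≤ a) (ha2 : -u ≤ a) (ha3 : a ≤ 2*R) (hAb : A ≤ 2*R - a) (hAb2 : -(2*R - a) ≤ A)
    (hq : 1 ≤ q) : False := by
  rcases le_or_gt 2 q with h2 | h2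
  · nlinarith [mul_nonneg (show (0:ℤ) ≤ 2*R^2+2*R+1 by nlinarith) (show (0:ℤ) ≤ q - 2 by omega),
      mul_nonneg (show (0:ℤ) ≤ 2*R+1 by omega) (show (0:ℤ) ≤ u + a by omega),
      mul_nonneg (show (0:ℤ) ≤ 2*R by omega) (show (0:ℤ) ≤ 2*R - a by omega)]
  · have hq1 : q = 1 := by omega
    subst hq1
    rcases le_or_gt u (-R-1) with h3 | h3
    · nlinarith [mul_nonneg (show (0:ℤ) ≤ 2*R+2 by omega) (show (0:ℤ) ≤ -(u+R+1) by omega)]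
    · nlinarith [mul_nonneg (show (0:ℤ) ≤ 2*R by omega) (show (0:ℤ) ≤ u + R by omega)]

lemma key_inj (r : ℕ) {i j i' j' : ℤ} (h : i.natAbs + j.natAbs ≤ r)
    (h' : i'.natAbs + j'.natAbs ≤ r)
    (hd : (2*(r:ℤ)^2+2*(r:ℤ)+1) ∣ (i - (2*(r:ℤ)+1)*j) - (i' - (2*(r:ℤ)+1)*j')) :
    i = i' ∧ j = j' := by
  obtain ⟨q, hq⟩ := hd
  set R : ℤ := ((r:ℕ) : ℤ) with hR
  have hR0 : 0 ≤ R := by positivity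
  have hi : |i| + |j| ≤ R := by rw [Int.abs_eq_natAbs, Int.abs_eq_natAbs]; omega
  have hi' : |i'| + |j'| ≤ R := by rw [Int.abs_eq_natAbs, Int.abs_eq_natAbs]; omega
  have hju : |j - j'| ≤ |j| + |j'| := abs_sub j j'
  have hju2 : |j| + |j'| ≤ 2*R := by
    have := abs_nonneg i; have := abs_nonneg i'; omega
  have hA1 : i - i' ≤ 2*R - (|j| + |j'|) := by
    have := le_abs_self i; have := neg_abs_le i'; omega
  have hA2 : -(2*R - (|j| + |j'|)) ≤ i - i' := by
    have := le_abs_self i'; have := neg_abs_le i; omega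
  have hq' : i - i' = (2*R+1)*(j - j') + (2*R^2+2*R+1)*q := by linarith [hq]
  rcases lt_trichotomy q 0 with hq0 | hq0 | hq0
  · exact (auxFalse R (j' - j) (-q) (i' - i) (|j| + |j'|) hR0 (by linarith)
      (by have := le_abs_self j'; have := neg_abs_le j; omega)
      (by have := le_abs_self j; have := neg_abs_le j'; omega)
      hju2 (by omega) (by omega) (by omega)).elim
  · subst hq0
    have huu : j = j' := by
      by_contra hne
      rcases lt_or_gt_of_ne hne with h5 | h5
      · nlinarith [mul_nonneg (show (0:ℤ) ≤ 2*R+1 by omega) (show (0:ℤ) ≤ j' - j - 1 by omega),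
          le_abs_self (j - j'), neg_abs_le (j - j')]
      · nlinarith [mul_nonneg (show (0:ℤ) ≤ 2*R+1 by omega) (show (0:ℤ) ≤ j - j' - 1 by omega),
          le_abs_self (j - j'), neg_abs_le (j - j')]
    constructor
    · subst huu; linarith [hq']
    · exact huu
  · exact (auxFalse R (j - j') q (i - i') (|j| + |j'|) hR0 hq'
      (by have := le_abs_self j; have := neg_abs_le j'; omega)
      (by have := le_abs_self j'; have := neg_abs_le j; omega)
      hju2 (by omega) (by omega) (by omega)).elim

lemma key_cover (r : ℕ) (m : ℤ) : ∃ i j : ℤ, i.natAbs + j.natAbs ≤ r ∧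
    (2*(r:ℤ)^2+2*(r:ℤ)+1) ∣ (i - (2*(r:ℤ)+1)*j - m) := by
  set d : ℤ := 2*(r:ℤ)^2+2*(r:ℤ)+1 with hd
  have hd0 : 0 < d := by positivity
  set f : ℤ × ℤ → ℤ := fun p => (p.1 - (2*(r:ℤ)+1)*p.2) % d with hf
  have hinj : Set.InjOn f (ballF r) := by
    intro p hp p' hp' hpp
    have h1 : d ∣ (p'.1 - (2*(r:ℤ)+1)*p'.2) - (p.1 - (2*(r:ℤ)+1)*p.2) := Int.ModEq.dvd hpp
    have h2 := key_inj r (mem_ballF.mp (Finset.mem_coe.mp hp'))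
      (mem_ballF.mp (Finset.mem_coe.mp hp)) h1
    exact Prod.ext h2.1.symm h2.2.symm
  have hsub : (ballF r).image f ⊆ Finset.Ico 0 d := by
    intro x hx
    obtain ⟨p, _, rfl⟩ := Finset.mem_image.mp hx
    exact Finset.mem_Ico.mpr ⟨Int.emod_nonneg _ (by omega), Int.emod_lt_of_pos _ hd0⟩
  have hcard : (Finset.Ico 0 d).card ≤ ((ballF r).image f).card := by
    rw [Finset.card_image_of_injOn hinj, Int.card_Ico]
    have := card_ballF r
    omega
  have heq := Finset.eq_of_subset_of_card_le hsub hcard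
  have hm : m % d ∈ (ballF r).image f := by
    rw [heq]
    exact Finset.mem_Ico.mpr ⟨Int.emod_nonneg _ (by omega), Int.emod_lt_of_pos _ hd0⟩
  obtain ⟨p, hp, hfp⟩ := Finset.mem_image.mp hm
  refine ⟨p.1, p.2, mem_ballF.mp hp, ?_⟩
  have h3 : (p.1 - (2*(r:ℤ)+1)*p.2) % d = m % d := hfp
  exact dvd_sub_comm.mp (Int.ModEq.dvd h3)

lemma row_count (d c : ℤ) (hd : 0 < d) (n : ℕ) :
    2*(n:ℤ)+1 - d ≤ d * (((Finset.Icc (-(n:ℤ)) (n:ℤ)).filter (fun x => d ∣ x - c)).card : ℤ) ∧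
    d * (((Finset.Icc (-(n:ℤ)) (n:ℤ)).filter (fun x => d ∣ x - c)).card : ℤ) ≤ 2*(n:ℤ)+1 + d := by
  have hd' : d ≠ 0 := ne_of_gt hd
  set A : ℤ := ((n:ℤ) - c) / d with hA
  set B : ℤ := ((n:ℤ) + c) / d with hB
  have hA1 : d * A + ((n:ℤ) - c) % d = (n:ℤ) - c := Int.mul_ediv_add_emod _ _
  have hA2 : 0 ≤ ((n:ℤ) - c) % d := Int.emod_nonneg _ hd'
  have hA3 : ((n:ℤ) - c) % d < d := Int.emod_lt_of_pos _ hd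
  have hB1 : d * B + ((n:ℤ) + c) % d = (n:ℤ) + c := Int.mul_ediv_add_emod _ _
  have hB2 : 0 ≤ ((n:ℤ) + c) % d := Int.emod_nonneg _ hd'
  have hB3 : ((n:ℤ) + c) % d < d := Int.emod_lt_of_pos _ hd
  have hset : (Finset.Icc (-(n:ℤ)) (n:ℤ)).filter (fun x => d ∣ x - c)
      = (Finset.Icc (-B) A).map ⟨fun k => c + d*k, fun x y h => by
          simp only at h; exact mul_left_cancel₀ hd' (by linarith)⟩ := by
    ext x
    simp only [Finset.mem_filter, Finset.mem_Icc, Finset.mem_map, Finset.mem_Icc,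
      Function.Embedding.coeFn_mk]
    constructor
    · rintro ⟨⟨hx1, hx2⟩, k, hk⟩
      refine ⟨k, ⟨?_, ?_⟩, by show c + d*k = x; linarith⟩
      · have : -k ≤ B := (Int.le_ediv_iff_mul_le hd).mpr (by linarith)
        linarith
      · exact (Int.le_ediv_iff_mul_le hd).mpr (by linarith)
    · rintro ⟨k, ⟨hk1, hk2⟩, rfl⟩
      have h1 : d * k ≤ d * A := mul_le_mul_of_nonneg_left hk2 (le_of_lt hd)
      have h2 : d * (-B) ≤ d * k := mul_le_mul_of_nonneg_left hk1 (le_of_lt hd)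
      show (-(n:ℤ) ≤ c + d*k ∧ c + d*k ≤ n) ∧ d ∣ (c + d*k) - c
      exact ⟨⟨by linarith [mul_neg d B], by linarith⟩, ⟨k, by ring⟩⟩
  rw [hset, Finset.card_map, Int.card_Icc]
  have hK0 : 0 ≤ A + 1 - -B := by
    by_contra hc
    push_neg at hc
    have : d * (A + B + 1) ≤ d * 0 := mul_le_mul_of_nonneg_left (by omega) (le_of_lt hd)
    have hn : (0:ℤ) ≤ (n:ℤ) := by positivity
    nlinarith
  rw [Int.toNat_of_nonneg hK0]
  have e1 : d * (A + 1 - -B) = d*A + d*B + d := by ring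
  constructor <;> linarith

lemma mem_stdPattern {d e : ℤ} {p : ℤ × ℤ} :
    p ∈ stdPattern d e ↔ d ∣ (p.1 - e * p.2) := by
  constructor
  · rintro ⟨x, y, rfl⟩
    exact ⟨x, by show (d*x+e*y) - e*y = d*x; ring⟩
  · rintro ⟨x, hx⟩
    refine ⟨x, p.2, ?_⟩
    have : p.1 = d * x + e * p.2 := by linarith [hx]
    exact Prod.ext this rfl

lemma dir_exists (i j : ℤ) : ∃ u1 u2 : ℤ, u1.natAbs + u2.natAbs = 1 ∧
    (i+u1).natAbs + (j+u2).natAbs = i.natAbs + j.natAbs + 1 := by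
  rcases le_or_gt 0 i with h | h
  · exact ⟨1, 0, by omega, by omega⟩
  · exact ⟨-1, 0, by omega, by omega⟩

open Classical in
lemma signal_term_le (t : ℕ) (S : Set (ℤ × ℤ)) (v T : ℤ × ℤ) (hT : T ∈ S)
    (hlt : gridDist v T < t) :
    T ∈ (Finset.Icc (v.1 - (t : ℤ)) (v.1 + (t : ℤ)) ×ˢ
      Finset.Icc (v.2 - (t : ℤ)) (v.2 + (t : ℤ))).filter
      (fun T => T ∈ S ∧ gridDist v T < t) := by
  rw [Finset.mem_filter, Finset.mem_product, Finset.mem_Icc, Finset.mem_Icc]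
  have h2 := hlt
  unfold gridDist at h2
  exact ⟨⟨⟨by omega, by omega⟩, by omega, by omega⟩, hT, hlt⟩

open Classical in
lemma totalSignal_ge_single (t : ℕ) (S : Set (ℤ × ℤ)) (v T : ℤ × ℤ) (hT : T ∈ S)
    (h1 : gridDist v T < t) : t - gridDist v T ≤ totalSignal t S v := by
  unfold totalSignal
  exact Finset.single_le_sum (f := fun X => t - gridDist v X) (fun x _ => Nat.zero_le _)
    (signal_term_le t S v T hT h1)

open Classical in
lemma totalSignal_ge_pair (t : ℕ) (S : Set (ℤ × ℤ)) (v T T' : ℤ × ℤ) (hne : T ≠ T')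
    (hT : T ∈ S) (hT' : T' ∈ S) (h1 : gridDist v T < t) (h2 : gridDist v T' < t) :
    (t - gridDist v T) + (t - gridDist v T') ≤ totalSignal t S v := by
  have hsub : ({T, T'} : Finset (ℤ×ℤ)) ⊆
      (Finset.Icc (v.1 - (t : ℤ)) (v.1 + (t : ℤ)) ×ˢ
        Finset.Icc (v.2 - (t : ℤ)) (v.2 + (t : ℤ))).filter
        (fun X => X ∈ S ∧ gridDist v X < t) :=
    Finset.insert_subset (signal_term_le t S v T hT h1)
      (Finset.singleton_subset_iff.mpr (signal_term_le t S v T' hT' h2))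
  have h5 : ∑ x ∈ ({T, T'} : Finset (ℤ×ℤ)), (t - gridDist v x) ≤ totalSignal t S v := by
    unfold totalSignal
    exact Finset.sum_le_sum_of_subset hsub
  rw [Finset.sum_pair hne] at h5
  exact h5

lemma ne_helper {r : ℕ} {i j i' j' u1 u2 x y : ℤ}
    (hu2 : (i+u1).natAbs + (j+u2).natAbs = i.natAbs + j.natAbs + 1)
    (heq : i.natAbs + j.natAbs = r) (hij' : i'.natAbs + j'.natAbs ≤ r)
    (h1 : x - i = x + u1 - i') (h2 : y - j = y + u2 - j') : False := by omega

lemma broadcast_main (r : ℕ) :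
    IsBroadcast (r+2) 3 (stdPattern (2*(r:ℤ)^2+2*(r:ℤ)+1) (2*(r:ℤ)+1)) := by
  classical
  intro v
  obtain ⟨a, b⟩ := v
  set d : ℤ := 2*(r:ℤ)^2+2*(r:ℤ)+1 with hd
  set e : ℤ := 2*(r:ℤ)+1 with he
  obtain ⟨i, j, hij, hdvd⟩ := key_cover r (a - e*b)
  have hTS : ((a - i, b - j) : ℤ × ℤ) ∈ stdPattern d e := by
    rw [mem_stdPattern]
    have h3 : ((a - i, b - j) : ℤ × ℤ).1 - e*((a - i, b - j) : ℤ × ℤ).2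
        = -(i - e*j - (a - e*b)) := by ring
    rw [h3]
    exact dvd_neg.mpr hdvd
  have hdistT : gridDist (a, b) (a - i, b - j) = i.natAbs + j.natAbs := by
    unfold gridDist
    omega
  rcases lt_or_eq_of_le hij with hlt | heq
  · have hb : 3 ≤ (r+2) - gridDist (a,b) (a - i, b - j) := by
      rw [hdistT]
      omega
    exact le_trans hb (totalSignal_ge_single (r+2) (stdPattern d e) (a,b) (a - i, b - j) hTS
      (by rw [hdistT]; omega))
  · obtain ⟨u1, u2, hu1, hu2⟩ := dir_exists i j
    obtain ⟨i', j', hij', hdvd'⟩ := key_cover r ((a + u1) - e*(b + u2))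
    have hT'S : ((a + u1 - i', b + u2 - j') : ℤ × ℤ) ∈ stdPattern d e := by
      rw [mem_stdPattern]
      have h3 : ((a + u1 - i', b + u2 - j') : ℤ × ℤ).1
          - e*((a + u1 - i', b + u2 - j') : ℤ × ℤ).2
          = -(i' - e*j' - ((a+u1) - e*(b+u2))) := by ring
      rw [h3]
      exact dvd_neg.mpr hdvd'
    have hdistT' : gridDist (a, b) (a + u1 - i', b + u2 - j')
        = (i' - u1).natAbs + (j' - u2).natAbs := by
      unfold gridDist
      omega
    have hne : ((a - i, b - j) : ℤ × ℤ) ≠ (a + u1 - i', b + u2 - j') := by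
      intro hTT
      exact ne_helper hu2 heq hij' (congrArg Prod.fst hTT) (congrArg Prod.snd hTT)
    have hb : 3 ≤ ((r+2) - gridDist (a,b) (a - i, b - j))
        + ((r+2) - gridDist (a,b) (a + u1 - i', b + u2 - j')) := by
      rw [hdistT, hdistT']
      omega
    exact le_trans hb (totalSignal_ge_pair (r+2) (stdPattern d e) (a,b) _ _ hne hTS hT'S
      (by rw [hdistT]; omega) (by rw [hdistT']; omega))

open Classical in
lemma gridCount_std (d e : ℤ) (n : ℕ) :
    gridCount (stdPattern d e) n
      = ∑ y ∈ Finset.Icc (-(n:ℤ)) (n:ℤ),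
          ((Finset.Icc (-(n:ℤ)) (n:ℤ)).filter (fun x => d ∣ x - e * y)).card := by
  unfold gridCount
  have hdec : (Finset.Icc (-(n:ℤ)) (n:ℤ) ×ˢ Finset.Icc (-(n:ℤ)) (n:ℤ)).filter
        (fun v => v ∈ stdPattern d e)
      = (Finset.Icc (-(n:ℤ)) (n:ℤ)).biUnion (fun y =>
          ((Finset.Icc (-(n:ℤ)) (n:ℤ)).filter (fun x => d ∣ x - e * y)).map
            ⟨fun x => (x, y), fun a b h => congrArg Prod.fst h⟩) := by
    ext p
    simp only [Finset.mem_filter, Finset.mem_product, Finset.mem_Icc, Finset.mem_biUnion,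
      Finset.mem_map, Function.Embedding.coeFn_mk, mem_stdPattern, Prod.ext_iff]
    constructor
    · rintro ⟨⟨h1, h2⟩, h3⟩
      exact ⟨p.2, h2, p.1, ⟨h1, h3⟩, rfl, rfl⟩
    · rintro ⟨y, hy, x, ⟨hx, hdvd⟩, h1, h2⟩
      rw [← h1, ← h2]
      exact ⟨⟨hx, hy⟩, hdvd⟩
  rw [hdec, Finset.card_biUnion]
  · exact Finset.sum_congr rfl (fun y _ => Finset.card_map _)
  · intro a _ b _ hab
    simp only [Finset.disjoint_left, Finset.mem_map, Function.Embedding.coeFn_mk]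
    rintro p ⟨x, _, rfl⟩ ⟨x', _, h⟩
    exact hab (congrArg Prod.snd h).symm

lemma count_bound (d e : ℤ) (hd : 0 < d) (n : ℕ) :
    (2*(n:ℤ)+1) * (2*(n:ℤ)+1 - d) ≤ d * (gridCount (stdPattern d e) n : ℤ) ∧
    d * (gridCount (stdPattern d e) n : ℤ) ≤ (2*(n:ℤ)+1) * (2*(n:ℤ)+1 + d) := by
  rw [gridCount_std]
  push_cast
  rw [Finset.mul_sum]
  have hcard : ((Finset.Icc (-(n:ℤ)) (n:ℤ)).card : ℤ) = 2*(n:ℤ)+1 := by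
    rw [Int.card_Icc]; omega
  constructor
  · calc (2*(n:ℤ)+1) * (2*(n:ℤ)+1 - d)
        = ∑ _y ∈ Finset.Icc (-(n:ℤ)) (n:ℤ), (2*(n:ℤ)+1 - d) := by
          rw [Finset.sum_const, nsmul_eq_mul, hcard]
      _ ≤ _ := Finset.sum_le_sum (fun y _ => (row_count d (e*y) hd n).1)
  · calc ∑ y ∈ Finset.Icc (-(n:ℤ)) (n:ℤ),
          d * (((Finset.Icc (-(n:ℤ)) (n:ℤ)).filter (fun x => d ∣ x - e * y)).card : ℤ)
        ≤ ∑ _y ∈ Finset.Icc (-(n:ℤ)) (n:ℤ), (2*(n:ℤ)+1 + d) :=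
          Finset.sum_le_sum (fun y _ => (row_count d (e*y) hd n).2)
      _ = (2*(n:ℤ)+1) * (2*(n:ℤ)+1 + d) := by
          rw [Finset.sum_const, nsmul_eq_mul, hcard]

theorem stmt9 (t : ℕ) (ht : 2 ≤ t) :
    ∃ (S : Set (ℤ × ℤ)) (L : ℝ), IsBroadcast t 3 S ∧
      Filter.Tendsto (fun n : ℕ => (gridCount S n : ℝ) / (2 * n + 1) ^ 2)
        Filter.atTop (nhds L) ∧
      L ≤ 1 / (2 * ((t : ℝ) - 1) ^ 2 - 2 * ((t : ℝ) - 1) + 1) := by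
  set r : ℕ := t - 2 with hr
  have htr : t = r + 2 := by omega
  set d : ℤ := 2*(r:ℤ)^2+2*(r:ℤ)+1 with hd
  set e : ℤ := 2*(r:ℤ)+1 with he
  have hd0 : (0:ℤ) < d := by positivity
  refine ⟨stdPattern d e, 1/(d:ℝ), ?_, ?_, ?_⟩
  · rw [htr]; exact broadcast_main r
  · have key : ∀ n : ℕ, |((gridCount (stdPattern d e) n : ℝ) / (2*(n:ℝ)+1)^2 - 1/(d:ℝ))|
        ≤ 1/(2*(n:ℝ)+1) := by
      intro n
      set C : ℝ := (gridCount (stdPattern d e) n : ℝ) with hC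
      set N : ℝ := 2*(n:ℝ)+1 with hN
      have hNpos : (0:ℝ) < N := by positivity
      have hdR : (0:ℝ) < (d:ℝ) := by exact_mod_cast hd0
      obtain ⟨hb1, hb2⟩ := count_bound d e hd0 n
      have hb1' : N * (N - (d:ℝ)) ≤ (d:ℝ) * C := by
        have := (Int.cast_le (R := ℝ)).mpr hb1
        push_cast at this ⊢
        convert this using 2 <;> push_cast <;> ring
      have hb2' : (d:ℝ) * C ≤ N * (N + (d:ℝ)) := by
        have := (Int.cast_le (R := ℝ)).mpr hb2
        push_cast at this ⊢
        convert this using 2 <;> push_cast <;> ring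
      have hstep : C / N^2 - 1/(d:ℝ) = (C*(d:ℝ) - N^2) / (N^2 * (d:ℝ)) := by
        field_simp
      have hden : (0:ℝ) < N^2 * (d:ℝ) := mul_pos (pow_pos hNpos 2) hdR
      rw [hstep, abs_div, abs_of_pos hden, div_le_iff₀ hden]
      have h7 : (1/N)*(N^2*(d:ℝ)) = N*(d:ℝ) := by field_simp
      rw [h7, abs_le]
      constructor <;> nlinarith
    have hN0 : Filter.Tendsto (fun n : ℕ => 1/(2*(n:ℝ)+1)) Filter.atTop (nhds 0) := by
      simp only [one_div]
      apply Filter.Tendsto.comp tendsto_inv_atTop_zero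
      apply Filter.tendsto_atTop_add_const_right
      exact (tendsto_natCast_atTop_atTop (R := ℝ)).const_mul_atTop two_pos
    have hsq : Filter.Tendsto
        (fun n : ℕ => (gridCount (stdPattern d e) n : ℝ) / (2*(n:ℝ)+1)^2 - 1/(d:ℝ))
        Filter.atTop (nhds 0) := by
      apply squeeze_zero_norm _ hN0
      intro n
      rw [Real.norm_eq_abs]
      exact key n
    have := hsq.add_const (1/(d:ℝ))
    simp only [sub_add_cancel, zero_add] at this
    exact this
  · apply le_of_eq
    have hrt : (r:ℝ) = (t:ℝ) - 2 := by
      rw [hr]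
      push_cast [Nat.cast_sub ht]
      ring
    have hcast : ((d:ℤ):ℝ) = 2*((t:ℝ)-1)^2 - 2*((t:ℝ)-1) + 1 := by
      rw [hd]
      push_cast
      rw [hrt]
      ring
    rw [hcast]
end

section
/- The standard pattern T(8,2) = {(8x+2y, y) : x, y ∈ ℤ} is a (4,5) broadcast on the infinite grid; that is, for every vertex v ∈ ℤ×ℤ, the total signal received at v from towers of strength 4 located at the points of T(8,2) is at least 5. -/
open Filter Topology

lemma mem_std82 (p q : ℤ) (h : (8:ℤ) ∣ (p - 2*q)) : (p, q) ∈ stdPattern 8 2 := by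
  obtain ⟨k, hk⟩ := h
  exact ⟨k, q, by rw [Prod.mk.injEq]; exact ⟨by omega, rfl⟩⟩

lemma signal_lb (a b : ℤ) (F : Finset (ℤ × ℤ))
    (hF : ∀ T ∈ F, T ∈ stdPattern 8 2 ∧ gridDist (a, b) T < 4 ∧
        a - 4 ≤ T.1 ∧ T.1 ≤ a + 4 ∧ b - 4 ≤ T.2 ∧ T.2 ≤ b + 4) :
    (∑ T ∈ F, (4 - gridDist (a, b) T)) ≤ totalSignal 4 (stdPattern 8 2) (a, b) := by
  classical
  unfold totalSignal
  apply Finset.sum_le_sum_of_subset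
  intro T hT
  obtain ⟨h1, h2, h3, h4, h5, h6⟩ := hF T hT
  simp only [Finset.mem_filter, Finset.mem_product, Finset.mem_Icc]
  refine ⟨⟨⟨?_, ?_⟩, ?_, ?_⟩, h1, h2⟩ <;> push_cast <;> omega

theorem stmt10 : IsBroadcast 4 5 (stdPattern 8 2) := by
  intro v
  obtain ⟨a, b⟩ := v
  obtain ⟨r, k, h0, h8, hk⟩ : ∃ r k : ℤ, 0 ≤ r ∧ r < 8 ∧ a = 8*k + 2*b + r :=
    ⟨(a - 2*b) % 8, (a - 2*b) / 8, Int.emod_nonneg _ (by norm_num),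
      Int.emod_lt_of_pos _ (by norm_num), by
        have := Int.mul_ediv_add_emod (a - 2*b) 8; omega⟩
  interval_cases r
  · refine le_trans ?_ (signal_lb a b {(a, b), (a+2, b+1)} ?_)
    · rw [Finset.sum_insert (by simp only [Finset.mem_singleton, Prod.mk.injEq]; omega),
        Finset.sum_singleton]
      simp only [gridDist]; omega
    · intro T hT
      simp only [Finset.mem_insert, Finset.mem_singleton] at hT
      rcases hT with rfl | rfl <;>
        exact ⟨mem_std82 _ _ (by omega), by simp only [gridDist]; omega,
          by omega, by omega, by omega, by omega⟩
  · refine le_trans ?_ (signal_lb a b {(a-1, b), (a+1, b+1)} ?_)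
    · rw [Finset.sum_insert (by simp only [Finset.mem_singleton, Prod.mk.injEq]; omega),
        Finset.sum_singleton]
      simp only [gridDist]; omega
    · intro T hT
      simp only [Finset.mem_insert, Finset.mem_singleton] at hT
      rcases hT with rfl | rfl <;>
        exact ⟨mem_std82 _ _ (by omega), by simp only [gridDist]; omega,
          by omega, by omega, by omega, by omega⟩
  · refine le_trans ?_ (signal_lb a b {(a-2, b), (a, b+1)} ?_)
    · rw [Finset.sum_insert (by simp only [Finset.mem_singleton, Prod.mk.injEq]; omega),
        Finset.sum_singleton]
      simp only [gridDist]; omega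
    · intro T hT
      simp only [Finset.mem_insert, Finset.mem_singleton] at hT
      rcases hT with rfl | rfl <;>
        exact ⟨mem_std82 _ _ (by omega), by simp only [gridDist]; omega,
          by omega, by omega, by omega, by omega⟩
  · refine le_trans ?_ (signal_lb a b {(a-3, b), (a-1, b+1), (a+1, b+2), (a+1, b-2)} ?_)
    · rw [Finset.sum_insert (by
          simp only [Finset.mem_insert, Finset.mem_singleton, Prod.mk.injEq]; omega),
        Finset.sum_insert (by
          simp only [Finset.mem_insert, Finset.mem_singleton, Prod.mk.injEq]; omega),
        Finset.sum_insert (by simp only [Finset.mem_singleton, Prod.mk.injEq]; omega),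
        Finset.sum_singleton]
      simp only [gridDist]; omega
    · intro T hT
      simp only [Finset.mem_insert, Finset.mem_singleton] at hT
      rcases hT with rfl | rfl | rfl | rfl <;>
        exact ⟨mem_std82 _ _ (by omega), by simp only [gridDist]; omega,
          by omega, by omega, by omega, by omega⟩
  · refine le_trans ?_ (signal_lb a b {(a, b+2), (a, b-2), (a-2, b+1)} ?_)
    · rw [Finset.sum_insert (by
          simp only [Finset.mem_insert, Finset.mem_singleton, Prod.mk.injEq]; omega),
        Finset.sum_insert (by simp only [Finset.mem_singleton, Prod.mk.injEq]; omega),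
        Finset.sum_singleton]
      simp only [gridDist]; omega
    · intro T hT
      simp only [Finset.mem_insert, Finset.mem_singleton] at hT
      rcases hT with rfl | rfl | rfl <;>
        exact ⟨mem_std82 _ _ (by omega), by simp only [gridDist]; omega,
          by omega, by omega, by omega, by omega⟩
  · refine le_trans ?_ (signal_lb a b {(a+3, b), (a+1, b-1), (a-1, b+2), (a-1, b-2)} ?_)
    · rw [Finset.sum_insert (by
          simp only [Finset.mem_insert, Finset.mem_singleton, Prod.mk.injEq]; omega),
        Finset.sum_insert (by
          simp only [Finset.mem_insert, Finset.mem_singleton, Prod.mk.injEq]; omega),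
        Finset.sum_insert (by simp only [Finset.mem_singleton, Prod.mk.injEq]; omega),
        Finset.sum_singleton]
      simp only [gridDist]; omega
    · intro T hT
      simp only [Finset.mem_insert, Finset.mem_singleton] at hT
      rcases hT with rfl | rfl | rfl | rfl <;>
        exact ⟨mem_std82 _ _ (by omega), by simp only [gridDist]; omega,
          by omega, by omega, by omega, by omega⟩
  · refine le_trans ?_ (signal_lb a b {(a+2, b), (a, b-1)} ?_)
    · rw [Finset.sum_insert (by simp only [Finset.mem_singleton, Prod.mk.injEq]; omega),
        Finset.sum_singleton]
      simp only [gridDist]; omega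
    · intro T hT
      simp only [Finset.mem_insert, Finset.mem_singleton] at hT
      rcases hT with rfl | rfl <;>
        exact ⟨mem_std82 _ _ (by omega), by simp only [gridDist]; omega,
          by omega, by omega, by omega, by omega⟩
  · refine le_trans ?_ (signal_lb a b {(a+1, b), (a-1, b-1)} ?_)
    · rw [Finset.sum_insert (by simp only [Finset.mem_singleton, Prod.mk.injEq]; omega),
        Finset.sum_singleton]
      simp only [gridDist]; omega
    · intro T hT
      simp only [Finset.mem_insert, Finset.mem_singleton] at hT
      rcases hT with rfl | rfl <;>
        exact ⟨mem_std82 _ _ (by omega), by simp only [gridDist]; omega,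
          by omega, by omega, by omega, by omega⟩
end

section
/- There exists a (4,5) broadcast on the infinite grid whose density exists and equals 1/8, which is strictly less than 1/5, the optimal density of a (2,1) broadcast; hence the optimal (2,1) and (4,5) broadcast densities are not equal, refuting the conjecture of Blessing, Insko, Johnson, and Mauretour that the optimal (t,r) and (t+2, r+4) broadcast densities coincide. -/
open Filter Topology

/-- Our candidate set: density-1/8 diagonal pattern. -/
def S8 : Set (ℤ × ℤ) := {p | (p.1 - 2 * p.2) % 8 = 0}

lemma sum_le_totalSignal (v : ℤ × ℤ) (F : Finset (ℤ × ℤ))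
    (hF : ∀ T ∈ F, T ∈ S8 ∧ gridDist v T < 4) :
    (∑ T ∈ F, (4 - gridDist v T)) ≤ totalSignal 4 S8 v := by
  classical
  unfold totalSignal
  apply Finset.sum_le_sum_of_subset
  intro T hT
  obtain ⟨h1, h2⟩ := hF T hT
  simp only [Finset.mem_filter, Finset.mem_product, Finset.mem_Icc]
  refine ⟨⟨⟨?_, ?_⟩, ?_, ?_⟩, h1, h2⟩ <;> (unfold gridDist at h2; omega)

lemma S8_broadcast : IsBroadcast 4 5 S8 := by
  rintro ⟨a, b⟩
  have hr : (a - 2*b) % 8 = 0 ∨ (a - 2*b) % 8 = 1 ∨ (a - 2*b) % 8 = 2 ∨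
      (a - 2*b) % 8 = 3 ∨ (a - 2*b) % 8 = 4 ∨ (a - 2*b) % 8 = 5 ∨
      (a - 2*b) % 8 = 6 ∨ (a - 2*b) % 8 = 7 := by omega
  rcases hr with h | h | h | h | h | h | h | h
  · -- r = 0 : towers at offsets (0,0), (-2,-1)
    refine le_trans ?_ (sum_le_totalSignal (a, b) {(a, b), (a-2, b-1)} ?_)
    · rw [Finset.sum_pair (by simp [Prod.ext_iff] <;> omega)]
      simp [gridDist] <;> omega
    · intro T hT
      simp only [Finset.mem_insert, Finset.mem_singleton] at hT
      rcases hT with rfl | rfl <;>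
        exact ⟨by simp only [S8, Set.mem_setOf_eq]; omega, by simp [gridDist] <;> omega⟩
  · -- r = 1 : offsets (-1,0), (1,1)
    refine le_trans ?_ (sum_le_totalSignal (a, b) {(a-1, b), (a+1, b+1)} ?_)
    · rw [Finset.sum_pair (by simp [Prod.ext_iff] <;> omega)]
      simp [gridDist] <;> omega
    · intro T hT
      simp only [Finset.mem_insert, Finset.mem_singleton] at hT
      rcases hT with rfl | rfl <;>
        exact ⟨by simp only [S8, Set.mem_setOf_eq]; omega, by simp [gridDist] <;> omega⟩
  · -- r = 2 : offsets (0,1), (-2,0)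
    refine le_trans ?_ (sum_le_totalSignal (a, b) {(a, b+1), (a-2, b)} ?_)
    · rw [Finset.sum_pair (by simp [Prod.ext_iff] <;> omega)]
      simp [gridDist] <;> omega
    · intro T hT
      simp only [Finset.mem_insert, Finset.mem_singleton] at hT
      rcases hT with rfl | rfl <;>
        exact ⟨by simp only [S8, Set.mem_setOf_eq]; omega, by simp [gridDist] <;> omega⟩
  · -- r = 3 : offsets (-1,1), (-3,0), (1,-2), (1,2)
    refine le_trans ?_ (sum_le_totalSignal (a, b)
        {(a-1, b+1), (a-3, b), (a+1, b-2), (a+1, b+2)} ?_)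
    · rw [Finset.sum_insert (by simp [Prod.ext_iff] <;> omega),
        Finset.sum_insert (by simp [Prod.ext_iff] <;> omega),
        Finset.sum_pair (by simp [Prod.ext_iff] <;> omega)]
      simp [gridDist] <;> omega
    · intro T hT
      simp only [Finset.mem_insert, Finset.mem_singleton] at hT
      rcases hT with rfl | rfl | rfl | rfl <;>
        exact ⟨by simp only [S8, Set.mem_setOf_eq]; omega, by simp [gridDist] <;> omega⟩
  · -- r = 4 : offsets (0,-2), (0,2), (-2,1)
    refine le_trans ?_ (sum_le_totalSignal (a, b) {(a, b-2), (a, b+2), (a-2, b+1)} ?_)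
    · rw [Finset.sum_insert (by simp [Prod.ext_iff] <;> omega),
        Finset.sum_pair (by simp [Prod.ext_iff] <;> omega)]
      simp [gridDist] <;> omega
    · intro T hT
      simp only [Finset.mem_insert, Finset.mem_singleton] at hT
      rcases hT with rfl | rfl | rfl <;>
        exact ⟨by simp only [S8, Set.mem_setOf_eq]; omega, by simp [gridDist] <;> omega⟩
  · -- r = 5 : offsets (1,-1), (-1,-2), (-1,2), (3,0)
    refine le_trans ?_ (sum_le_totalSignal (a, b)
        {(a+1, b-1), (a-1, b-2), (a-1, b+2), (a+3, b)} ?_)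
    · rw [Finset.sum_insert (by simp [Prod.ext_iff] <;> omega),
        Finset.sum_insert (by simp [Prod.ext_iff] <;> omega),
        Finset.sum_pair (by simp [Prod.ext_iff] <;> omega)]
      simp [gridDist] <;> omega
    · intro T hT
      simp only [Finset.mem_insert, Finset.mem_singleton] at hT
      rcases hT with rfl | rfl | rfl | rfl <;>
        exact ⟨by simp only [S8, Set.mem_setOf_eq]; omega, by simp [gridDist] <;> omega⟩
  · -- r = 6 : offsets (0,-1), (2,0)
    refine le_trans ?_ (sum_le_totalSignal (a, b) {(a, b-1), (a+2, b)} ?_)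
    · rw [Finset.sum_pair (by simp [Prod.ext_iff] <;> omega)]
      simp [gridDist] <;> omega
    · intro T hT
      simp only [Finset.mem_insert, Finset.mem_singleton] at hT
      rcases hT with rfl | rfl <;>
        exact ⟨by simp only [S8, Set.mem_setOf_eq]; omega, by simp [gridDist] <;> omega⟩
  · -- r = 7 : offsets (1,0), (-1,-1)
    refine le_trans ?_ (sum_le_totalSignal (a, b) {(a+1, b), (a-1, b-1)} ?_)
    · rw [Finset.sum_pair (by simp [Prod.ext_iff] <;> omega)]
      simp [gridDist] <;> omega
    · intro T hT
      simp only [Finset.mem_insert, Finset.mem_singleton] at hT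
      rcases hT with rfl | rfl <;>
        exact ⟨by simp only [S8, Set.mem_setOf_eq]; omega, by simp [gridDist] <;> omega⟩

lemma gridCount_lower (n : ℕ) : ((2*n+1)/8) * (2*n+1) ≤ gridCount S8 n := by
  classical
  set m : ℕ := (2*n+1)/8 with hm
  have h8 : 8 * m ≤ 2*n+1 := by omega
  have hcard : (Finset.Icc (0:ℤ) ((m:ℤ)-1) ×ˢ Finset.Icc (-(n:ℤ)) (n:ℤ)).card
      = m * (2*n+1) := by
    have h1 : ((m:ℤ) - 1 + 1 - 0).toNat = m := by omega
    have h2 : ((n:ℤ) + 1 - -(n:ℤ)).toNat = 2*n+1 := by omega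
    rw [Finset.card_product, Int.card_Icc, Int.card_Icc, h1, h2]
  rw [gridCount, ← hcard]
  apply Finset.card_le_card_of_injOn
      (fun p : ℤ × ℤ => (8 * p.1 + (-(n:ℤ) + (2 * p.2 + n) % 8), p.2))
  · rintro ⟨k, c⟩ hp
    simp only [Finset.mem_coe, Finset.mem_product, Finset.mem_Icc] at hp
    simp only [Finset.mem_coe, Finset.mem_filter, Finset.mem_product, Finset.mem_Icc, S8,
      Set.mem_setOf_eq]
    refine ⟨⟨⟨?_, ?_⟩, ?_, ?_⟩, ?_⟩ <;> omega
  · rintro ⟨k, c⟩ _ ⟨k', c'⟩ _ heq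
    simp only [Prod.mk.injEq] at heq ⊢
    omega

lemma gridCount_upper (n : ℕ) : gridCount S8 n ≤ (n/4 + 1) * (2*n+1) := by
  classical
  set M : ℕ := n/4 with hM
  have h4 : 4 * M ≤ n ∧ n ≤ 4 * M + 3 := by omega
  have hcard : (Finset.Icc (0:ℤ) (M:ℤ) ×ˢ Finset.Icc (-(n:ℤ)) (n:ℤ)).card
      = (M + 1) * (2*n+1) := by
    have h1 : ((M:ℤ) + 1 - 0).toNat = M + 1 := by omega
    have h2 : ((n:ℤ) + 1 - -(n:ℤ)).toNat = 2*n+1 := by omega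
    rw [Finset.card_product, Int.card_Icc, Int.card_Icc, h1, h2]
  rw [gridCount, ← hcard]
  apply Finset.card_le_card_of_surjOn
      (fun p : ℤ × ℤ => (8 * p.1 + (-(n:ℤ) + (2 * p.2 + n) % 8), p.2))
  rintro ⟨x, y⟩ hp
  simp only [Finset.coe_filter, Finset.mem_product, Finset.mem_Icc, S8,
    Set.mem_setOf_eq] at hp
  obtain ⟨⟨⟨hx1, hx2⟩, hy1, hy2⟩, hmod⟩ := hp
  have hdvd : (8:ℤ) ∣ (x - (-(n:ℤ) + (2 * y + n) % 8)) := by omega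
  obtain ⟨k, hk⟩ := hdvd
  refine ⟨(k, y), ?_, ?_⟩
  · simp only [Finset.coe_product, Set.mem_prod, Finset.mem_coe, Finset.mem_Icc]
    constructor
    · constructor <;> omega
    · exact ⟨hy1, hy2⟩
  · simp only [Prod.mk.injEq]
    constructor
    · omega
    · trivial

theorem stmt11 :
    (∃ S : Set (ℤ × ℤ), IsBroadcast 4 5 S ∧
      Filter.Tendsto (fun n : ℕ => (gridCount S n : ℝ) / (2 * n + 1) ^ 2)
        Filter.atTop (nhds (1 / 8))) ∧
    (1 : ℝ) / 8 < 1 / 5 := by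
  constructor
  · refine ⟨S8, S8_broadcast, ?_⟩
    have hL : ∀ n : ℕ, (0:ℝ) < 2 * n + 1 := fun n => by positivity
    have hlow : ∀ n : ℕ, (1:ℝ)/8 - 1/(2 * n + 1) ≤ (gridCount S8 n : ℝ) / (2 * n + 1) ^ 2 := by
      intro n
      have h1 := gridCount_lower n
      set m : ℕ := (2*n+1)/8 with hm
      have hm7 : 2*n+1 ≤ 8*m + 7 := by omega
      have hC : (m : ℝ) * (2 * n + 1) ≤ (gridCount S8 n : ℝ) := by
        have : ((m * (2*n+1) : ℕ) : ℝ) ≤ ((gridCount S8 n : ℕ) : ℝ) := by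
          exact_mod_cast h1
        push_cast at this
        linarith
      have hm7' : (2 * n + 1 : ℝ) ≤ 8 * m + 7 := by exact_mod_cast hm7
      rw [div_sub_div _ _ (by norm_num) (ne_of_gt (hL n)), div_le_div_iff₀
        (by positivity) (by positivity)]
      nlinarith [hL n, mul_le_mul_of_nonneg_right hm7' (le_of_lt (hL n)),
        mul_le_mul_of_nonneg_right hC (le_of_lt (hL n))]
    have hup : ∀ n : ℕ, (gridCount S8 n : ℝ) / (2 * n + 1) ^ 2 ≤ (1:ℝ)/8 + 1/(2 * n + 1) := by
      intro n
      have h1 := gridCount_upper n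
      set M : ℕ := n/4 with hM
      have hM4 : 8 * (M + 1) ≤ 2*n + 8 := by omega
      have hC : (gridCount S8 n : ℝ) ≤ (M + 1 : ℝ) * (2 * n + 1) := by
        have : ((gridCount S8 n : ℕ) : ℝ) ≤ (((M+1) * (2*n+1) : ℕ) : ℝ) := by
          exact_mod_cast h1
        push_cast at this
        linarith
      have hM4' : (8:ℝ) * (M + 1) ≤ 2 * n + 8 := by exact_mod_cast hM4
      rw [div_add_div _ _ (by norm_num) (ne_of_gt (hL n)), div_le_div_iff₀
        (by positivity) (by positivity)]
      nlinarith [hL n, mul_le_mul_of_nonneg_right hM4' (le_of_lt (hL n)),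
        mul_le_mul_of_nonneg_right hC (le_of_lt (hL n))]
    have h2 : Tendsto (fun n : ℕ => (2 * n + 1 : ℝ)) atTop atTop := by
      apply Filter.tendsto_atTop_add_const_right
      exact (tendsto_natCast_atTop_atTop (R := ℝ)).const_mul_atTop (by norm_num)
    have hz : Tendsto (fun n : ℕ => (1:ℝ)/(2 * n + 1)) atTop (nhds 0) := by
      simpa [one_div, Pi.inv_def] using h2.inv_tendsto_atTop
    have hg : Tendsto (fun n : ℕ => (1:ℝ)/8 - 1/(2 * n + 1)) atTop (nhds (1/8)) := by
      simpa using tendsto_const_nhds.sub hz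
    have hh : Tendsto (fun n : ℕ => (1:ℝ)/8 + 1/(2 * n + 1)) atTop (nhds (1/8)) := by
      simpa using tendsto_const_nhds.add hz
    exact tendsto_of_tendsto_of_tendsto_of_le_of_le hg hh hlow hup
  · norm_num
end

section
/- The standard pattern T(5,3) = {(5x+3y, y) : x, y ∈ ℤ} is a (2,1) broadcast on the infinite grid; that is, for every vertex v ∈ ℤ×ℤ, the total signal received at v from towers of strength 2 located at the points of T(5,3) is at least 1. -/
open Filter Topology

open Classical in
lemma aux_near (v T0 : ℤ × ℤ) (hS : T0 ∈ stdPattern 5 3) (hd : gridDist v T0 ≤ 1) :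
    1 ≤ totalSignal 2 (stdPattern 5 3) v := by
  have hd1 : (v.1 - T0.1).natAbs + (v.2 - T0.2).natAbs ≤ 1 := hd
  have hmem : T0 ∈ (Finset.Icc (v.1 - (2 : ℤ)) (v.1 + (2 : ℤ)) ×ˢ
      Finset.Icc (v.2 - (2 : ℤ)) (v.2 + (2 : ℤ))).filter
      (fun T => T ∈ stdPattern 5 3 ∧ gridDist v T < 2) := by
    simp only [Finset.mem_filter, Finset.mem_product, Finset.mem_Icc]
    refine ⟨⟨⟨?_, ?_⟩, ?_, ?_⟩, hS, ?_⟩ <;> omega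
  have := Finset.single_le_sum (f := fun T => 2 - gridDist v T)
    (fun i _ => Nat.zero_le _) hmem
  calc 1 ≤ 2 - gridDist v T0 := by omega
    _ ≤ _ := this

theorem stmt12 : IsBroadcast 2 1 (stdPattern 5 3) := by
  intro v
  obtain ⟨a, b⟩ := v
  have h5 : (a - 3 * b) % 5 = 0 ∨ (a - 3 * b) % 5 = 1 ∨ (a - 3 * b) % 5 = 2 ∨
      (a - 3 * b) % 5 = 3 ∨ (a - 3 * b) % 5 = 4 := by omega
  rcases h5 with h | h | h | h | h
  · exact aux_near (a, b) (a, b) ⟨(a - 3 * b) / 5, b, by simp; omega⟩ (by simp [gridDist])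
  · exact aux_near (a, b) (a - 1, b) ⟨(a - 1 - 3 * b) / 5, b, by simp; omega⟩
      (by simp [gridDist])
  · exact aux_near (a, b) (a, b - 1) ⟨(a - 3 * (b - 1)) / 5, b - 1, by simp; omega⟩
      (by simp [gridDist])
  · exact aux_near (a, b) (a, b + 1) ⟨(a - 3 * (b + 1)) / 5, b + 1, by simp; omega⟩
      (by simp [gridDist])
  · exact aux_near (a, b) (a + 1, b) ⟨(a + 1 - 3 * b) / 5, b, by simp; omega⟩
      (by simp [gridDist])
end

section
/- The standard pattern T(13,5) = {(13x+5y, y) : x, y ∈ ℤ} is a (3,1) broadcast on the infinite grid; that is, for every vertex v ∈ ℤ×ℤ, the total signal received at v from towers of strength 3 located at the points of T(13,5) is at least 1. -/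
open Filter Topology

lemma signal_pos {S : Set (ℤ × ℤ)} {v T : ℤ × ℤ} (hT : T ∈ S) (hd : gridDist v T < 3) :
    1 ≤ totalSignal 3 S v := by
  unfold totalSignal
  have h1 : 1 ≤ 3 - gridDist v T := by omega
  refine le_trans h1 (Finset.single_le_sum (f := fun T => 3 - gridDist v T) (fun _ _ => Nat.zero_le _) ?_)
  simp only [Finset.mem_filter, Finset.mem_product, Finset.mem_Icc]
  refine ⟨⟨?_, ?_⟩, hT, hd⟩ <;> (unfold gridDist at hd; omega)

lemma exists_close (v : ℤ × ℤ) : ∃ T ∈ stdPattern 13 5, gridDist v T < 3 := by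
  obtain ⟨a, b⟩ := v
  have hq : 13 * ((a - 5*b) / 13) + (a - 5*b) % 13 = a - 5*b := Int.mul_ediv_add_emod (a - 5*b) 13
  set m := (a - 5*b) / 13 with hm
  set r := (a - 5*b) % 13 with hrdef
  have hr0 : 0 ≤ r := Int.emod_nonneg _ (by norm_num)
  have hr1 : r < 13 := Int.emod_lt_of_pos _ (by norm_num)
  clear_value m r
  have pick : ∀ c k : ℤ, |r - 13*c - 5*k| + |k| ≤ 2 →
      ∃ T ∈ stdPattern 13 5, gridDist (a, b) T < 3 := by
    intro c k h
    refine ⟨(13*(m+c) + 5*(b+k), b+k), ⟨m+c, b+k, rfl⟩, ?_⟩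
    simp only [gridDist]
    rw [Int.abs_eq_natAbs, Int.abs_eq_natAbs] at h
    omega
  interval_cases r
  · exact pick 0 0 (by norm_num)
  · exact pick 0 0 (by norm_num)
  · exact pick 0 0 (by norm_num)
  · exact pick 1 (-2) (by norm_num)
  · exact pick 0 1 (by norm_num)
  · exact pick 0 1 (by norm_num)
  · exact pick 0 1 (by norm_num)
  · exact pick 1 (-1) (by norm_num)
  · exact pick 1 (-1) (by norm_num)
  · exact pick 1 (-1) (by norm_num)
  · exact pick 0 2 (by norm_num)
  · exact pick 1 0 (by norm_num)
  · exact pick 1 0 (by norm_num)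

theorem stmt13 : IsBroadcast 3 1 (stdPattern 13 5) := by
  intro v
  obtain ⟨T, hT, hd⟩ := exists_close v
  exact signal_pos hT hd
end

section
/- The standard pattern T(8,3) = {(8x+3y, y) : x, y ∈ ℤ} is a (3,2) broadcast on the infinite grid; that is, for every vertex v ∈ ℤ×ℤ, the total signal received at v from towers of strength 3 located at the points of T(8,3) is at least 2. -/
open Filter Topology

open Classical in
lemma tower_mem (a b x y : ℤ)
    (h : ((a : ℤ) - (8*x+3*y)).natAbs + (b - y).natAbs < 3) :
    ((8*x+3*y : ℤ), y) ∈ (Finset.Icc ((a,b).1 - (3:ℤ)) ((a,b).1 + 3) ×ˢ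
      Finset.Icc ((a,b).2 - (3:ℤ)) ((a,b).2 + 3)).filter
      (fun T => T ∈ stdPattern 8 3 ∧ gridDist (a,b) T < 3) := by
  simp only [Finset.mem_filter, Finset.mem_product, Finset.mem_Icc, gridDist, stdPattern,
    Set.mem_setOf_eq]
  refine ⟨⟨⟨?_, ?_⟩, ?_, ?_⟩, ⟨x, y, rfl⟩, ?_⟩ <;> omega

open Classical in
lemma one_tower (a b x y : ℤ)
    (h : (a - (8*x+3*y)).natAbs + (b - y).natAbs ≤ 1) :
    2 ≤ totalSignal 3 (stdPattern 8 3) (a, b) := by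
  have hm := tower_mem a b x y (by omega)
  have := Finset.single_le_sum (f := fun T => 3 - gridDist (a,b) T)
    (fun i _ => Nat.zero_le _) hm
  have hd : gridDist (a,b) (8*x+3*y, y) ≤ 1 := h
  unfold totalSignal
  simp only [Nat.cast_ofNat] at this ⊢
  omega

open Classical in
lemma two_towers (a b x1 y1 x2 y2 : ℤ) (hne : y1 ≠ y2)
    (h1 : (a - (8*x1+3*y1)).natAbs + (b - y1).natAbs ≤ 2)
    (h2 : (a - (8*x2+3*y2)).natAbs + (b - y2).natAbs ≤ 2) :
    2 ≤ totalSignal 3 (stdPattern 8 3) (a, b) := by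
  have hm1 := tower_mem a b x1 y1 (by omega)
  have hm2 := tower_mem a b x2 y2 (by omega)
  have hne' : ((8*x1+3*y1 : ℤ), y1) ≠ ((8*x2+3*y2 : ℤ), y2) := by
    simp [Prod.ext_iff]; omega
  have hsub : ({((8*x1+3*y1 : ℤ), y1), ((8*x2+3*y2 : ℤ), y2)} : Finset (ℤ × ℤ)) ⊆ _ :=
    Finset.insert_subset hm1 (Finset.singleton_subset_iff.mpr hm2)
  have hsum := Finset.sum_le_sum_of_subset (f := fun T => 3 - gridDist (a,b) T) hsub
  rw [Finset.sum_pair hne'] at hsum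
  have hd1 : gridDist (a,b) (8*x1+3*y1, y1) ≤ 2 := h1
  have hd2 : gridDist (a,b) (8*x2+3*y2, y2) ≤ 2 := h2
  unfold totalSignal
  simp only [Nat.cast_ofNat] at hsum ⊢
  omega

theorem stmt14 : IsBroadcast 3 2 (stdPattern 8 3) := by
  intro v
  obtain ⟨a, b⟩ := v
  obtain ⟨q, r, hr0, hr8, ha⟩ : ∃ q r : ℤ, 0 ≤ r ∧ r < 8 ∧ a = 8*q + 3*b + r :=
    ⟨(a - 3*b) / 8, (a - 3*b) % 8, Int.emod_nonneg _ (by norm_num),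
      Int.emod_lt_of_pos _ (by norm_num), by omega⟩
  interval_cases r
  · exact one_tower a b q b (by omega)
  · exact one_tower a b q b (by omega)
  · exact two_towers a b q b (q+1) (b-2) (by omega) (by omega) (by omega)
  · exact one_tower a b q (b+1) (by omega)
  · exact two_towers a b q (b+1) (q+1) (b-1) (by omega) (by omega) (by omega)
  · exact one_tower a b (q+1) (b-1) (by omega)
  · exact two_towers a b (q+1) b q (b+2) (by omega) (by omega) (by omega)
  · exact one_tower a b (q+1) b (by omega)
end

section
/- The standard pattern T(10,3) = {(10x+3y, y) : x, y ∈ ℤ} is a (4,4) broadcast on the infinite grid; consequently there is a (4,4) broadcast of density 1/10, which is strictly less than 1/8, the optimal density of a (3,2) broadcast, so the optimal (3,2) and (4,4) broadcast densities are not equal. -/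
open Filter Topology

lemma mem_std_s16 (p : ℤ × ℤ) : p ∈ stdPattern 10 3 ↔ (10 : ℤ) ∣ (p.1 - 3 * p.2) := by
  constructor
  · rintro ⟨x, y, rfl⟩
    simp
  · rintro ⟨k, hk⟩
    exact ⟨k, p.2, by rw [Prod.ext_iff]; constructor <;> simp <;> linarith⟩

open Classical in
lemma signal_box (v : ℤ × ℤ) : totalSignal 4 (stdPattern 10 3) v =
    ∑ T ∈ (Finset.Icc (v.1 - 4) (v.1 + 4) ×ˢ Finset.Icc (v.2 - 4) (v.2 + 4)).filter
      (fun T => (10 : ℤ) ∣ (T.1 - 3 * T.2) ∧ gridDist v T < 4),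
    (4 - gridDist v T) := by
  unfold totalSignal
  norm_num
  refine Finset.sum_congr (Finset.filter_congr fun T _ => ?_) fun _ _ => rfl
  rw [mem_std_s16]

open Classical in
lemma signal_shift (a b r : ℤ) (h : (10 : ℤ) ∣ (a - 3 * b - r)) :
    totalSignal 4 (stdPattern 10 3) (a, b) = totalSignal 4 (stdPattern 10 3) (r, 0) := by
  rw [signal_box, signal_box]
  refine Finset.sum_nbij' (fun T => (T.1 - (a - r), T.2 - b))
    (fun T => (T.1 + (a - r), T.2 + b)) ?_ ?_ ?_ ?_ ?_
  · rintro ⟨c, d⟩ hT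
    simp only [Finset.mem_filter, Finset.mem_product, Finset.mem_Icc] at hT ⊢
    refine ⟨⟨⟨by linarith [hT.1.1.1], by linarith [hT.1.1.2]⟩,
      ⟨by linarith [hT.1.2.1], by linarith [hT.1.2.2]⟩⟩, ?_, ?_⟩
    · have := hT.2.1
      have : (10 : ℤ) ∣ (c - 3 * d) - (a - 3 * b - r) := dvd_sub this h
      convert this using 1; ring
    · have := hT.2.2
      unfold gridDist at this ⊢
      convert this using 3 <;> ring
  · rintro ⟨c, d⟩ hT
    simp only [Finset.mem_filter, Finset.mem_product, Finset.mem_Icc] at hT ⊢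
    refine ⟨⟨⟨by linarith [hT.1.1.1], by linarith [hT.1.1.2]⟩,
      ⟨by linarith [hT.1.2.1], by linarith [hT.1.2.2]⟩⟩, ?_, ?_⟩
    · have := hT.2.1
      have : (10 : ℤ) ∣ (c - 3 * d) + (a - 3 * b - r) := dvd_add this h
      convert this using 1; ring
    · have := hT.2.2
      unfold gridDist at this ⊢
      convert this using 3 <;> ring
  · rintro ⟨c, d⟩ _; simp
  · rintro ⟨c, d⟩ _; simp
  · rintro ⟨c, d⟩ _
    unfold gridDist
    congr 3 <;> ring

lemma broadcast43 : ∀ v : ℤ × ℤ, 4 ≤ totalSignal 4 (stdPattern 10 3) v := by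
  rintro ⟨a, b⟩
  have h0 : (0 : ℤ) ≤ (a - 3 * b) % 10 := Int.emod_nonneg _ (by norm_num)
  have h1 : (a - 3 * b) % 10 < 10 := Int.emod_lt_of_pos _ (by norm_num)
  rw [signal_shift a b ((a - 3 * b) % 10) (Int.dvd_self_sub_of_emod_eq rfl)]
  set r := (a - 3 * b) % 10 with hr
  clear_value r
  interval_cases r <;> rw [signal_box] <;> decide

open Classical in
lemma gridCount_eq (n : ℕ) : gridCount (stdPattern 10 3) n =
    ∑ q ∈ Finset.Icc (-(n : ℤ)) (n : ℤ),
      ((Finset.Icc (-(n : ℤ)) (n : ℤ)).filter (fun p => p ≡ 3 * q [ZMOD 10])).card := by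
  unfold gridCount
  rw [Finset.card_filter, Finset.sum_product_right]
  refine Finset.sum_congr rfl fun q _ => ?_
  rw [Finset.card_filter]
  refine Finset.sum_congr rfl fun p _ => ?_
  congr 1
  rw [mem_std_s16]
  simp only [Int.ModEq, eq_iff_iff]
  omega

lemma row_bound (n : ℕ) (q : ℤ) :
    ((2 * n + 1 : ℚ)) / 10 - 1 ≤
      (((Finset.Icc (-(n : ℤ)) (n : ℤ)).filter (fun p => p ≡ 3 * q [ZMOD 10])).card : ℚ) ∧
    (((Finset.Icc (-(n : ℤ)) (n : ℤ)).filter (fun p => p ≡ 3 * q [ZMOD 10])).card : ℚ) ≤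
      ((2 * n + 1 : ℚ)) / 10 + 1 := by
  have h : ((((Finset.Icc (-(n : ℤ)) (n : ℤ)).filter (fun p => p ≡ 3 * q [ZMOD 10])).card : ℤ))
      = max (⌈(((n : ℤ) + 1) - 3 * q) / (10 : ℚ)⌉ - ⌈((-(n : ℤ)) - 3 * q) / (10 : ℚ)⌉) 0 := by
    have hIcc : Finset.Icc (-(n : ℤ)) (n : ℤ) = Finset.Ico (-(n : ℤ)) ((n : ℤ) + 1) := by
      ext z; simp [Int.lt_add_one_iff]
    rw [hIcc, Int.Ico_filter_modEq_card _ _ (show (0:ℤ) < 10 by norm_num) (3 * q)]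
    push_cast
    ring_nf
  have h2 : ((((Finset.Icc (-(n : ℤ)) (n : ℤ)).filter (fun p => p ≡ 3 * q [ZMOD 10])).card : ℚ))
      = max ((⌈(((n : ℚ)) + 1 - 3 * q) / (10 : ℚ)⌉ : ℚ) - (⌈((-(n : ℚ)) - 3 * q) / (10 : ℚ)⌉ : ℚ)) 0 := by
    have := congrArg (fun z : ℤ => (z : ℚ)) h
    push_cast at this ⊢
    convert this using 4 <;> push_cast <;> ring
  set y := (((n : ℚ)) + 1 - 3 * q) / (10 : ℚ)
  set x := ((-(n : ℚ)) - 3 * q) / (10 : ℚ)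
  have hyx : y - x = (2 * n + 1 : ℚ) / 10 := by
    simp only [y, x]; ring
  have hy1 : y ≤ (⌈y⌉ : ℚ) := Int.le_ceil y
  have hy2 : (⌈y⌉ : ℚ) < y + 1 := Int.ceil_lt_add_one y
  have hx1 : x ≤ (⌈x⌉ : ℚ) := Int.le_ceil x
  have hx2 : (⌈x⌉ : ℚ) < x + 1 := Int.ceil_lt_add_one x
  rw [h2]
  constructor
  · calc (2 * n + 1 : ℚ) / 10 - 1 = (y - x) - 1 := by rw [hyx]
    _ ≤ (⌈y⌉ : ℚ) - (⌈x⌉ : ℚ) := by linarith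
    _ ≤ _ := le_max_left _ _
  · refine max_le (by linarith) (by positivity)

lemma gridCount_bound (n : ℕ) :
    (2 * n + 1 : ℚ) * ((2 * n + 1 : ℚ) / 10 - 1) ≤ (gridCount (stdPattern 10 3) n : ℚ) ∧
    (gridCount (stdPattern 10 3) n : ℚ) ≤ (2 * n + 1 : ℚ) * ((2 * n + 1 : ℚ) / 10 + 1) := by
  have hcard : (Finset.Icc (-(n : ℤ)) (n : ℤ)).card = 2 * n + 1 := by
    rw [Int.card_Icc]; omega
  rw [gridCount_eq]
  push_cast [Nat.cast_sum]
  constructor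
  · calc (2 * n + 1 : ℚ) * ((2 * n + 1 : ℚ) / 10 - 1)
        = ∑ _q ∈ Finset.Icc (-(n : ℤ)) (n : ℤ), ((2 * n + 1 : ℚ) / 10 - 1) := by
          rw [Finset.sum_const, hcard]; push_cast; ring
    _ ≤ _ := Finset.sum_le_sum fun q _ => (row_bound n q).1
  · calc _ ≤ ∑ _q ∈ Finset.Icc (-(n : ℤ)) (n : ℤ), ((2 * n + 1 : ℚ) / 10 + 1) :=
          Finset.sum_le_sum fun q _ => (row_bound n q).2
    _ = _ := by rw [Finset.sum_const, hcard]; push_cast; ring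

lemma density_tendsto :
    Filter.Tendsto (fun n : ℕ => (gridCount (stdPattern 10 3) n : ℝ) / (2 * n + 1) ^ 2)
      Filter.atTop (nhds (1 / 10)) := by
  have hat : Filter.Tendsto (fun n : ℕ => (2 * (n : ℝ) + 1)) Filter.atTop Filter.atTop := by
    apply Filter.tendsto_atTop_add_const_right
    exact (tendsto_natCast_atTop_atTop).const_mul_atTop (by norm_num)
  have hz : Filter.Tendsto (fun n : ℕ => 1 / (2 * (n : ℝ) + 1)) Filter.atTop (nhds 0) := by
    exact hat.inv_tendsto_atTop.congr fun n => by simp [one_div]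
  have hlow : Filter.Tendsto (fun n : ℕ => 1 / 10 - 1 / (2 * (n : ℝ) + 1)) Filter.atTop
      (nhds (1 / 10)) := by simpa using tendsto_const_nhds.sub hz
  have hup : Filter.Tendsto (fun n : ℕ => 1 / 10 + 1 / (2 * (n : ℝ) + 1)) Filter.atTop
      (nhds (1 / 10)) := by simpa using tendsto_const_nhds.add hz
  refine tendsto_of_tendsto_of_tendsto_of_le_of_le hlow hup ?_ ?_
  · intro n
    have hb := Rat.cast_le (K := ℝ) |>.mpr (gridCount_bound n).1
    push_cast at hb
    have hp : (0 : ℝ) < 2 * (n : ℝ) + 1 := by positivity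
    rw [le_div_iff₀ (by positivity)]
    calc (1 / 10 - 1 / (2 * (n : ℝ) + 1)) * (2 * (n : ℝ) + 1) ^ 2
        = (2 * n + 1 : ℝ) * ((2 * n + 1) / 10 - 1) := by field_simp
      _ ≤ _ := hb
  · intro n
    have hb := Rat.cast_le (K := ℝ) |>.mpr (gridCount_bound n).2
    push_cast at hb
    have hp : (0 : ℝ) < 2 * (n : ℝ) + 1 := by positivity
    rw [div_le_iff₀ (by positivity)]
    calc (gridCount (stdPattern 10 3) n : ℝ) ≤ (2 * (n:ℝ) + 1) * ((2 * (n:ℝ) + 1) / 10 + 1) := hb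
      _ = (1 / 10 + 1 / (2 * (n : ℝ) + 1)) * (2 * (n : ℝ) + 1) ^ 2 := by field_simp

theorem stmt16 :
    IsBroadcast 4 4 (stdPattern 10 3) ∧
    (∃ S : Set (ℤ × ℤ), IsBroadcast 4 4 S ∧
      Filter.Tendsto (fun n : ℕ => (gridCount S n : ℝ) / (2 * n + 1) ^ 2)
        Filter.atTop (nhds (1 / 10))) ∧
    (1 : ℝ) / 10 < 1 / 8 := by
  exact ⟨broadcast43, ⟨stdPattern 10 3, broadcast43, density_tendsto⟩, by norm_num⟩
end

section
/- The standard pattern T(18,5) = {(18x+5y, y) : x, y ∈ ℤ} is a (4,2) broadcast on the infinite grid; that is, for every vertex v ∈ ℤ×ℤ, the total signal received at v from towers of strength 4 located at the points of T(18,5) is at least 2. -/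
open Filter Topology

open Classical in
lemma mem_sig_filter {S : Set (ℤ × ℤ)} {v T : ℤ × ℤ} (hT : T ∈ S)
    (hd : gridDist v T ≤ 3) :
    T ∈ (Finset.Icc (v.1 - (4 : ℤ)) (v.1 + (4 : ℤ)) ×ˢ
      Finset.Icc (v.2 - (4 : ℤ)) (v.2 + (4 : ℤ))).filter
      (fun T => T ∈ S ∧ gridDist v T < 4) := by
  simp only [Finset.mem_filter, Finset.mem_product, Finset.mem_Icc]
  simp only [gridDist] at hd ⊢
  refine ⟨⟨?_, ?_⟩, hT, ?_⟩ <;> omega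

open Classical in
lemma one_tower_s18 {S : Set (ℤ × ℤ)} {v T : ℤ × ℤ} (hT : T ∈ S)
    (hd : gridDist v T ≤ 2) : 2 ≤ totalSignal 4 S v := by
  have hmem := mem_sig_filter hT (hd.trans (by norm_num))
  have h2 : (2:ℕ) ≤ 4 - gridDist v T := by omega
  exact h2.trans (Finset.single_le_sum (f := fun T => 4 - gridDist v T)
    (fun i _ => Nat.zero_le _) hmem)

open Classical in
lemma two_tower {S : Set (ℤ × ℤ)} {v T₁ T₂ : ℤ × ℤ} (hne : T₁ ≠ T₂)
    (h1 : T₁ ∈ S) (h2 : T₂ ∈ S)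
    (hd1 : gridDist v T₁ ≤ 3) (hd2 : gridDist v T₂ ≤ 3) :
    2 ≤ totalSignal 4 S v := by
  have hsub : ({T₁, T₂} : Finset (ℤ × ℤ)) ⊆
      (Finset.Icc (v.1 - (4 : ℤ)) (v.1 + (4 : ℤ)) ×ˢ
      Finset.Icc (v.2 - (4 : ℤ)) (v.2 + (4 : ℤ))).filter
      (fun T => T ∈ S ∧ gridDist v T < 4) := by
    intro x hx
    simp only [Finset.mem_insert, Finset.mem_singleton] at hx
    rcases hx with rfl | rfl
    · exact mem_sig_filter h1 hd1
    · exact mem_sig_filter h2 hd2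
  have h := Finset.sum_le_sum_of_subset (f := fun T => 4 - gridDist v T) hsub
  rw [Finset.sum_pair (f := fun T => 4 - gridDist v T) hne] at h
  have h2 : (2:ℕ) ≤ (4 - gridDist v T₁) + (4 - gridDist v T₂) := by omega
  exact h2.trans h

theorem stmt18 : IsBroadcast 4 2 (stdPattern 18 5) := by
  intro v
  obtain ⟨a, b⟩ := v
  obtain ⟨q, r, hr0, hr18, heq⟩ : ∃ q r : ℤ, 0 ≤ r ∧ r < 18 ∧ a - 5 * b = 18 * q + r :=
    ⟨(a - 5 * b) / 18, (a - 5 * b) % 18, Int.emod_nonneg _ (by norm_num),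
      Int.emod_lt_of_pos _ (by norm_num), (Int.mul_ediv_add_emod _ _).symm⟩
  have mem : ∀ s k : ℤ, (18 * (q + s) + 5 * (b + k), b + k) ∈ stdPattern 18 5 :=
    fun s k => ⟨q + s, b + k, rfl⟩
  interval_cases r
  · exact one_tower_s18 (mem 0 0) (by simp only [gridDist]; omega)
  · exact one_tower_s18 (mem 0 0) (by simp only [gridDist]; omega)
  · exact one_tower_s18 (mem 0 0) (by simp only [gridDist]; omega)
  · exact two_tower (by intro h; rw [Prod.ext_iff] at h; omega) (mem 0 0) (mem 0 1)
      (by simp only [gridDist]; omega) (by simp only [gridDist]; omega)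
  · exact one_tower_s18 (mem 0 1) (by simp only [gridDist]; omega)
  · exact one_tower_s18 (mem 0 1) (by simp only [gridDist]; omega)
  · exact one_tower_s18 (mem 0 1) (by simp only [gridDist]; omega)
  · exact two_tower (by intro h; rw [Prod.ext_iff] at h; omega) (mem 0 1) (mem 1 (-2))
      (by simp only [gridDist]; omega) (by simp only [gridDist]; omega)
  · exact one_tower_s18 (mem 1 (-2)) (by simp only [gridDist]; omega)
  · exact two_tower (by intro h; rw [Prod.ext_iff] at h; omega) (mem 1 (-2)) (mem 0 2)
      (by simp only [gridDist]; omega) (by simp only [gridDist]; omega)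
  · exact one_tower_s18 (mem 0 2) (by simp only [gridDist]; omega)
  · exact two_tower (by intro h; rw [Prod.ext_iff] at h; omega) (mem 0 2) (mem 1 (-1))
      (by simp only [gridDist]; omega) (by simp only [gridDist]; omega)
  · exact one_tower_s18 (mem 1 (-1)) (by simp only [gridDist]; omega)
  · exact one_tower_s18 (mem 1 (-1)) (by simp only [gridDist]; omega)
  · exact one_tower_s18 (mem 1 (-1)) (by simp only [gridDist]; omega)
  · exact two_tower (by intro h; rw [Prod.ext_iff] at h; omega) (mem 1 0) (mem 1 (-1))
      (by simp only [gridDist]; omega) (by simp only [gridDist]; omega)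
  · exact one_tower_s18 (mem 1 0) (by simp only [gridDist]; omega)
  · exact one_tower_s18 (mem 1 0) (by simp only [gridDist]; omega)
end
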